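/- arXiv:2211.01222 — 10 statements merged into one kernel-verified Lean document; each statement's English description precedes it below -/
import Mathlib

section
/- For all real numbers θ₁ > 0 and θ₂ > 0 there exists a constant C > 0 such that for every nonzero complex number s lying on the nonnegative real axis or on the nonnegative imaginary axis, one has |2s / (exp(−2is(θ₁ + iθ₂)) − 1)| ≤ C; equivalently, |s·(coth(−is(θ₁ + iθ₂)) − 1)| ≤ C. -/
/-- `s` lies on the nonnegative real axis or on the nonnegative imaginary axis. -/
def OnAxes (s : ℂ) : Prop := (s.im = 0 ∧ 0 ≤ s.re) ∨ (s.re = 0 ∧ 0 ≤ s.im)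

lemma re_le_abs_exp_sub_one (z : ℂ) : z.re ≤ ‖Complex.exp z - 1‖ := by
  have h1 : ‖Complex.exp z‖ - ‖(1:ℂ)‖ ≤ ‖Complex.exp z - 1‖ :=
    le_trans (le_abs_self _) (abs_norm_sub_norm_le _ _)
  have h2 : Real.exp z.re - 1 ≤ ‖Complex.exp z - 1‖ := by
    simpa [Complex.norm_exp] using h1
  have h3 : z.re + 1 ≤ Real.exp z.re := Real.add_one_le_exp _
  linarith

theorem stmt_0 (θ₁ θ₂ : ℝ) (hθ₁ : 0 < θ₁) (hθ₂ : 0 < θ₂) :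
    ∃ C : ℝ, 0 < C ∧ ∀ s : ℂ, s ≠ 0 → OnAxes s →
      ‖2 * s /
        (Complex.exp (-2 * Complex.I * s * ((θ₁ : ℂ) + (θ₂ : ℂ) * Complex.I)) - 1)‖ ≤ C := by
  refine ⟨1/θ₁ + 1/θ₂, by positivity, ?_⟩
  intro s hs hax
  set z : ℂ := -2 * Complex.I * s * ((θ₁ : ℂ) + (θ₂ : ℂ) * Complex.I) with hz
  have hzre : z.re = 2*θ₁*s.im + 2*θ₂*s.re := by
    simp [hz, Complex.mul_re, Complex.mul_im, Complex.add_re, Complex.add_im]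
    ring
  have key : ∀ a : ℝ, 0 ≤ a → ‖s‖ = a → a > 0 → z.re > 0 →
      ‖2 * s / (Complex.exp z - 1)‖ ≤ 2 * a / z.re := by
    intro a _ habs ha hzr
    rw [norm_div, norm_mul]
    have hle := re_le_abs_exp_sub_one z
    have habs' : ‖(2:ℂ)‖ * ‖s‖ = 2 * a := by
      rw [habs]; norm_num
    rw [habs']
    exact div_le_div_of_nonneg_left (by positivity) hzr hle
  rcases hax with ⟨him, hre⟩ | ⟨hre, him⟩
  · have hx : 0 < s.re := by
      rcases hre.lt_or_eq with h | h
      · exact h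
      · exact absurd (Complex.ext h.symm him) hs
    have habs : ‖s‖ = s.re := by
      rw [show s = (s.re : ℂ) from Complex.ext rfl him, Complex.norm_real, Real.norm_eq_abs,
        abs_of_pos] <;> simp [hx]
    have hzr : 0 < z.re := by rw [hzre, him]; nlinarith
    have := key s.re hx.le habs hx hzr
    have heq : 2 * s.re / z.re = 1/θ₂ := by
      rw [hzre, him]; field_simp; ring
    calc ‖2 * s / (Complex.exp z - 1)‖ ≤ 2 * s.re / z.re := this
      _ = 1/θ₂ := heq
      _ ≤ 1/θ₁ + 1/θ₂ := le_add_of_nonneg_left (by positivity)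
  · have hy : 0 < s.im := by
      rcases him.lt_or_eq with h | h
      · exact h
      · exact absurd (Complex.ext hre h.symm) hs
    have habs : ‖s‖ = s.im := by
      rw [show s = (s.im : ℂ) * Complex.I from Complex.ext (by simp [hre]) (by simp)]
      simp [abs_of_pos hy]
    have hzr : 0 < z.re := by rw [hzre, hre]; nlinarith
    have := key s.im hy.le habs hy hzr
    have heq : 2 * s.im / z.re = 1/θ₁ := by
      rw [hzre, hre]; field_simp; ring
    calc ‖2 * s / (Complex.exp z - 1)‖ ≤ 2 * s.im / z.re := this
      _ = 1/θ₁ := heq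
      _ ≤ 1/θ₁ + 1/θ₂ := le_add_of_nonneg_right (by positivity)
end

section
/- For all real numbers θ₁ > 0 and θ₂ > 0 there exists a constant c > 0 such that for every complex number s lying on the nonnegative real axis or on the nonnegative imaginary axis, one has |exp(−2is(θ₁ + iθ₂)) + 1| ≥ c. -/
open Real

lemma key_lower_bound (k a b : ℝ) (hk : 0 < k) (hb : k * |b| ≤ a) :
    min 1 (Real.exp (k * (π / 2)) - 1) ≤ ‖Complex.exp ((a : ℂ) + (b : ℂ) * Complex.I) + 1‖ := by
  by_cases hc : 0 ≤ Real.cos b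
  · refine le_trans (min_le_left _ _) ?_
    calc (1:ℝ) ≤ Real.exp a * Real.cos b + 1 := by
          nlinarith [Real.exp_pos a]
      _ = (Complex.exp ((a : ℂ) + (b : ℂ) * Complex.I) + 1).re := by
          simp [Complex.exp_re]
      _ ≤ ‖_‖ := Complex.re_le_norm _
  · refine le_trans (min_le_right _ _) ?_
    have hbb : π / 2 ≤ |b| := by
      by_contra h
      push_neg at h
      exact hc (Real.cos_nonneg_of_mem_Icc ⟨by linarith [abs_le.mp h.le |>.1], abs_le.mp h.le |>.2⟩)
    have ha2 : k * (π / 2) ≤ a := le_trans (by nlinarith) hb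
    have h1 : Real.exp (k * (π/2)) ≤ Real.exp a := Real.exp_le_exp.mpr ha2
    have h2 := norm_add_le (Complex.exp ((a : ℂ) + (b : ℂ) * Complex.I) + 1) (-1)
    simp only [add_neg_cancel_right, norm_neg, norm_one] at h2
    have h3 : ‖Complex.exp ((a : ℂ) + (b : ℂ) * Complex.I)‖ = Real.exp a := by
      simp [Complex.norm_exp]
    linarith

theorem stmt_3 (θ₁ θ₂ : ℝ) (hθ₁ : 0 < θ₁) (hθ₂ : 0 < θ₂) :
    ∃ c : ℝ, 0 < c ∧ ∀ s : ℂ, OnAxes s →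
      c ≤ ‖
        (Complex.exp (-2 * Complex.I * s * ((θ₁ : ℂ) + (θ₂ : ℂ) * Complex.I)) + 1)‖ := by
  set k := min (θ₂ / θ₁) (θ₁ / θ₂) with hkdef
  have hk : 0 < k := lt_min (div_pos hθ₂ hθ₁) (div_pos hθ₁ hθ₂)
  refine ⟨min 1 (Real.exp (k * (π / 2)) - 1), ?_, ?_⟩
  · refine lt_min one_pos ?_
    have h := Real.add_one_le_exp (k * (π/2))
    have : 0 < k * (π/2) := by positivity
    linarith
  · rintro s (⟨him, hre⟩ | ⟨hre, him⟩)
    · have heq : -2 * Complex.I * s * ((θ₁ : ℂ) + (θ₂ : ℂ) * Complex.I)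
          = ((2 * s.re * θ₂ : ℝ) : ℂ) + ((-(2 * s.re * θ₁) : ℝ) : ℂ) * Complex.I := by
        apply Complex.ext <;> simp [him]
      rw [heq]
      apply key_lower_bound k _ _ hk
      rw [abs_neg, abs_of_nonneg (by positivity)]
      have h1 : k ≤ θ₂ / θ₁ := min_le_left _ _
      have h2 : θ₂ / θ₁ * θ₁ = θ₂ := div_mul_cancel₀ _ hθ₁.ne'
      nlinarith [mul_le_mul_of_nonneg_right h1 (show (0:ℝ) ≤ 2 * s.re * θ₁ by positivity)]
    · have heq : -2 * Complex.I * s * ((θ₁ : ℂ) + (θ₂ : ℂ) * Complex.I)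
          = ((2 * s.im * θ₁ : ℝ) : ℂ) + ((2 * s.im * θ₂ : ℝ) : ℂ) * Complex.I := by
        apply Complex.ext <;> simp [hre]
      rw [heq]
      apply key_lower_bound k _ _ hk
      rw [abs_of_nonneg (by positivity)]
      have h1 : k ≤ θ₁ / θ₂ := min_le_right _ _
      have h2 : θ₁ / θ₂ * θ₂ = θ₁ := div_mul_cancel₀ _ hθ₂.ne'
      nlinarith [mul_le_mul_of_nonneg_right h1 (show (0:ℝ) ≤ 2 * s.im * θ₂ by positivity)]
end

section
/- For all real numbers θ₁ > 0 and θ₂ > 0 there exists a constant C > 0 such that for every nonzero complex number s lying on the nonnegative real axis or on the nonnegative imaginary axis, one has |s·coth(−is(θ₁ + iθ₂))| ≤ C·(1 + |s|). -/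
/-- The complex hyperbolic cotangent. -/
noncomputable def coth (z : ℂ) : ℂ := Complex.cosh z / Complex.sinh z

lemma sinh_decomp (z : ℂ) : Complex.sinh z =
    (Real.sinh z.re * Real.cos z.im : ℝ) + (Real.cosh z.re * Real.sin z.im : ℝ) * Complex.I := by
  conv_lhs => rw [← Complex.re_add_im z]
  rw [Complex.sinh_add, Complex.sinh_mul_I, Complex.cosh_mul_I]
  push_cast
  rw [← Complex.ofReal_sinh, ← Complex.ofReal_cosh, ← Complex.ofReal_sin, ← Complex.ofReal_cos]
  ring

lemma cosh_decomp (z : ℂ) : Complex.cosh z =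
    (Real.cosh z.re * Real.cos z.im : ℝ) + (Real.sinh z.re * Real.sin z.im : ℝ) * Complex.I := by
  conv_lhs => rw [← Complex.re_add_im z]
  rw [Complex.cosh_add, Complex.sinh_mul_I, Complex.cosh_mul_I]
  push_cast
  rw [← Complex.ofReal_sinh, ← Complex.ofReal_cosh, ← Complex.ofReal_sin, ← Complex.ofReal_cos]
  ring

lemma sq_abs_sinh (z : ℂ) :
    ‖Complex.sinh z‖ ^ 2 = Real.sinh z.re ^ 2 + Real.sin z.im ^ 2 := by
  rw [Complex.sq_norm, sinh_decomp z, Complex.normSq_add_mul_I]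
  have hc := Real.cosh_sq z.re
  have hs := Real.sin_sq_add_cos_sq z.im
  nlinarith [hs, hc]

lemma sq_abs_cosh (z : ℂ) :
    ‖Complex.cosh z‖ ^ 2 = Real.sinh z.re ^ 2 + Real.cos z.im ^ 2 := by
  rw [Complex.sq_norm, cosh_decomp z, Complex.normSq_add_mul_I]
  have hc := Real.cosh_sq z.re
  have hs := Real.sin_sq_add_cos_sq z.im
  nlinarith [hs, hc]

lemma abs_sinh_ge (z : ℂ) (h : 0 ≤ z.re) : Real.sinh z.re ≤ ‖Complex.sinh z‖ := by
  have h1 : Real.sinh z.re ^ 2 ≤ ‖Complex.sinh z‖ ^ 2 := by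
    rw [sq_abs_sinh]; nlinarith [sq_nonneg (Real.sin z.im)]
  have h2 : 0 ≤ Real.sinh z.re := Real.sinh_nonneg_iff.2 h
  nlinarith [norm_nonneg (Complex.sinh z)]

lemma abs_cosh_le (z : ℂ) : ‖Complex.cosh z‖ ≤ Real.cosh z.re := by
  have h1 : ‖Complex.cosh z‖ ^ 2 ≤ Real.cosh z.re ^ 2 := by
    rw [sq_abs_cosh, Real.cosh_sq]
    nlinarith [Real.sin_sq_add_cos_sq z.im, sq_nonneg (Real.sin z.im)]
  nlinarith [norm_nonneg (Complex.cosh z), Real.cosh_pos z.re]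

/-- `coth a ≤ 1 + 1/a` for real `a > 0`. -/
lemma real_coth_le (a : ℝ) (ha : 0 < a) : Real.cosh a / Real.sinh a ≤ 1 + 1 / a := by
  have hs : 0 < Real.sinh a := Real.sinh_pos_iff.2 ha
  rw [div_le_iff₀ hs]
  have h1 : Real.cosh a - Real.sinh a = Real.exp (-a) := Real.cosh_sub_sinh a
  have h2 : (1 : ℝ) + 2 * a ≤ Real.exp (2 * a) := by
    have := Real.add_one_le_exp (2 * a); linarith
  have h3 : a * Real.exp (-a) ≤ Real.sinh a := by
    rw [Real.sinh_eq]
    have he : Real.exp (-a) > 0 := Real.exp_pos _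
    have : Real.exp a = Real.exp (2 * a) * Real.exp (-a) := by
      rw [← Real.exp_add]; ring_nf
    rw [this]
    nlinarith
  have h4 : Real.exp (-a) ≤ Real.sinh a / a := (le_div_iff₀ ha).2 (by nlinarith)
  have h5 : Real.cosh a = Real.sinh a + Real.exp (-a) := by linarith
  have h6 : (1 + 1 / a) * Real.sinh a = Real.sinh a + Real.sinh a / a := by
    field_simp
  nlinarith

theorem stmt_4 (θ₁ θ₂ : ℝ) (hθ₁ : 0 < θ₁) (hθ₂ : 0 < θ₂) :
    ∃ C : ℝ, 0 < C ∧ ∀ s : ℂ, s ≠ 0 → OnAxes s →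
      ‖s * coth (-Complex.I * s * ((θ₁ : ℂ) + (θ₂ : ℂ) * Complex.I))‖ ≤
        C * (1 + ‖s‖) := by
  set c : ℝ := min θ₁ θ₂ with hc
  have hcpos : 0 < c := lt_min hθ₁ hθ₂
  refine ⟨1 + 1 / c, by positivity, ?_⟩
  intro s hs haxes
  set z : ℂ := -Complex.I * s * ((θ₁ : ℂ) + (θ₂ : ℂ) * Complex.I) with hz
  have habs : 0 < ‖s‖ := norm_pos_iff.mpr hs
  -- z.re ≥ c * |s|
  have hre : c * ‖s‖ ≤ z.re := by
    rcases haxes with ⟨h1, h2⟩ | ⟨h1, h2⟩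
    · have h2' : 0 < s.re := lt_of_le_of_ne h2 (by
        intro h; exact hs (Complex.ext h.symm h1))
      have hzre : z.re = s.re * θ₂ := by
        simp [hz, Complex.mul_re, Complex.mul_im, h1]
      have habss : ‖s‖ = s.re := by
        have : s = (s.re : ℂ) := Complex.ext rfl h1
        nth_rewrite 1 [this]
        rw [Complex.norm_real, Real.norm_eq_abs, abs_of_nonneg h2]
      rw [hzre, habss]
      have : c ≤ θ₂ := min_le_right _ _
      nlinarith
    · have h2' : 0 < s.im := lt_of_le_of_ne h2 (by
        intro h; exact hs (Complex.ext h1 h.symm))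
      have hzre : z.re = s.im * θ₁ := by
        simp [hz, Complex.mul_re, Complex.mul_im, h1]
      have habss : ‖s‖ = s.im := by
        have : s = (s.im : ℂ) * Complex.I := by
          apply Complex.ext <;> simp [h1]
        rw [this]
        simp [abs_of_nonneg h2]
      rw [hzre, habss]
      have : c ≤ θ₁ := min_le_left _ _
      nlinarith
  have hzre_pos : 0 < z.re := lt_of_lt_of_le (by positivity) hre
  have hsinh_pos : 0 < Real.sinh z.re := Real.sinh_pos_iff.2 hzre_pos
  have hsl : Real.sinh z.re ≤ ‖Complex.sinh z‖ := abs_sinh_ge z hzre_pos.le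
  have hcu : ‖Complex.cosh z‖ ≤ Real.cosh z.re := abs_cosh_le z
  have hsz : ‖Complex.sinh z‖ ≠ 0 := ne_of_gt (lt_of_lt_of_le hsinh_pos hsl)
  -- main bound
  rw [norm_mul]
  unfold coth
  rw [norm_div]
  have key : ‖s‖ * (‖Complex.cosh z‖ / ‖Complex.sinh z‖) ≤
      ‖s‖ * (Real.cosh z.re / Real.sinh z.re) := by
    apply mul_le_mul_of_nonneg_left _ habs.le
    apply div_le_div₀ (Real.cosh_pos z.re).le hcu hsinh_pos hsl
  refine le_trans key ?_
  have hcoth : Real.cosh z.re / Real.sinh z.re ≤ 1 + 1 / z.re := real_coth_le z.re hzre_pos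
  have h1z : 1 / z.re ≤ 1 / (c * ‖s‖) := by
    apply one_div_le_one_div_of_le (by positivity) hre
  have : ‖s‖ * (Real.cosh z.re / Real.sinh z.re) ≤
      ‖s‖ * (1 + 1 / (c * ‖s‖)) := by
    apply mul_le_mul_of_nonneg_left (by linarith) habs.le
  refine le_trans this ?_
  have heq : ‖s‖ * (1 + 1 / (c * ‖s‖)) = ‖s‖ + 1 / c := by
    field_simp
  rw [heq]
  have h1c : 0 < 1 / c := by positivity
  nlinarith
end

section
/- For all real numbers θ₁ > 0 and θ₂ > 0 there exists a constant C > 0 such that for all natural numbers m, n and all nonzero complex numbers s and t, each lying on the nonnegative real axis or on the nonnegative imaginary axis, one has |s^m · t^n · ( coth(−is(θ₁+iθ₂))^m · coth(−it(θ₁+iθ₂))^n − 1 )| ≤ C^{m+n} · (1+|s|)^m · (1+|t|)^n. -/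
lemma abs_coth_le {z : ℂ} (hz : 0 < z.re) :
    ‖coth z‖ ≤ 1 + 1 / z.re := by
  set x := z.re with hx
  have hcosh : ‖Complex.cosh z‖ ≤ Real.cosh x := by
    rw [Complex.cosh, Real.cosh_eq]
    calc ‖(Complex.exp z + Complex.exp (-z)) / 2‖
        ≤ (‖Complex.exp z‖ + ‖Complex.exp (-z)‖) / 2 := by
          rw [norm_div]
          simp only [Complex.norm_two]
          gcongr
          exact norm_add_le _ _
      _ = (Real.exp x + Real.exp (-x)) / 2 := by
          rw [Complex.norm_exp, Complex.norm_exp]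
          simp [hx]
  have hsinh : Real.sinh x ≤ ‖Complex.sinh z‖ := by
    rw [Complex.sinh, Real.sinh_eq]
    calc (Real.exp x - Real.exp (-x)) / 2
        = (‖Complex.exp z‖ - ‖Complex.exp (-z)‖) / 2 := by
          rw [Complex.norm_exp, Complex.norm_exp]; simp [hx]
      _ ≤ ‖Complex.exp z - Complex.exp (-z)‖ / 2 := by
          have h := norm_add_le (Complex.exp z - Complex.exp (-z)) (Complex.exp (-z))
          simp only [sub_add_cancel] at h
          linarith
      _ = ‖(Complex.exp z - Complex.exp (-z)) / 2‖ := by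
          rw [norm_div]; simp
  have hsx : 0 < Real.sinh x := Real.sinh_pos_iff.2 hz
  have h1 : ‖coth z‖ ≤ Real.cosh x / Real.sinh x := by
    rw [coth, norm_div]
    exact div_le_div₀ (Real.cosh_pos x).le hcosh hsx hsinh
  refine h1.trans ?_
  -- cosh x / sinh x ≤ 1 + 1/x
  rw [div_le_iff₀ hsx, Real.cosh_eq, Real.sinh_eq]
  have hx0 : 0 < x := hz
  have hmul : Real.exp x * Real.exp (-x) = 1 := by
    rw [← Real.exp_add]; simp
  have hsq : Real.exp x * Real.exp x = Real.exp (2 * x) := by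
    rw [← Real.exp_add]; ring_nf
  have hexp : 1 + 2 * x ≤ Real.exp (2 * x) := by
    have := Real.add_one_le_exp (2 * x); linarith
  have h2 : x * (Real.exp x + Real.exp (-x)) ≤ (x + 1) * (Real.exp x - Real.exp (-x)) := by
    nlinarith [Real.exp_pos x, Real.exp_pos (-x)]
  have hy0 : 0 < 1 / x := by positivity
  have h4 : Real.exp x + Real.exp (-x) ≤ (1 + 1 / x) * (Real.exp x - Real.exp (-x)) := by
    have h3 := mul_le_mul_of_nonneg_left h2 hy0.le
    calc Real.exp x + Real.exp (-x)
        = (1 / x) * (x * (Real.exp x + Real.exp (-x))) := by field_simp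
      _ ≤ (1 / x) * ((x + 1) * (Real.exp x - Real.exp (-x))) := h3
      _ = (1 + 1 / x) * (Real.exp x - Real.exp (-x)) := by field_simp
  linarith

lemma key (θ₁ θ₂ : ℝ) (hθ₁ : 0 < θ₁) (hθ₂ : 0 < θ₂) (s : ℂ) (hs : s ≠ 0) (hOs : OnAxes s) :
    ‖s * coth (-Complex.I * s * ((θ₁ : ℂ) + (θ₂ : ℂ) * Complex.I))‖ ≤
      (1 + 1 / min θ₁ θ₂) * (1 + ‖s‖) := by
  set δ := min θ₁ θ₂ with hδdef
  have hδ : 0 < δ := lt_min hθ₁ hθ₂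
  set z := -Complex.I * s * ((θ₁ : ℂ) + (θ₂ : ℂ) * Complex.I) with hzdef
  have hre : z.re = s.im * θ₁ + s.re * θ₂ := by
    simp [hzdef, Complex.mul_re, Complex.mul_im]
    ring
  have habs : δ * ‖s‖ ≤ z.re ∧ 0 < z.re := by
    rcases hOs with ⟨him, hre'⟩ | ⟨hre', him⟩
    · have hre'' : 0 < s.re := by
        rcases hre'.lt_or_eq with h | h
        · exact h
        · exact absurd (Complex.ext h.symm him) hs
      have : ‖s‖ = s.re := by
        rw [Complex.norm_def, Complex.normSq_apply, him]
        simpa using Real.sqrt_mul_self hre'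
      constructor
      · rw [hre, this, him]
        have : δ * s.re ≤ θ₂ * s.re := by
          apply mul_le_mul_of_nonneg_right (min_le_right _ _) hre'
        nlinarith
      · rw [hre, him]; nlinarith
    · have him'' : 0 < s.im := by
        rcases him.lt_or_eq with h | h
        · exact h
        · exact absurd (Complex.ext hre' h.symm) hs
      have : ‖s‖ = s.im := by
        rw [Complex.norm_def, Complex.normSq_apply, hre']
        simpa using Real.sqrt_mul_self him
      constructor
      · rw [hre, this, hre']
        have : δ * s.im ≤ θ₁ * s.im := by
          apply mul_le_mul_of_nonneg_right (min_le_left _ _) him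
        nlinarith
      · rw [hre, hre']; nlinarith
  obtain ⟨h1, h2⟩ := habs
  have hcoth := abs_coth_le h2
  rw [norm_mul]
  have habspos : 0 < ‖s‖ := norm_pos_iff.mpr hs
  calc ‖s‖ * ‖coth z‖
      ≤ ‖s‖ * (1 + 1 / z.re) := by
        exact mul_le_mul_of_nonneg_left hcoth habspos.le
    _ = ‖s‖ + ‖s‖ / z.re := by ring
    _ ≤ ‖s‖ + 1 / δ := by
        have hd : ‖s‖ / z.re ≤ 1 / δ := by
          rw [div_le_div_iff₀ h2 hδ]
          nlinarith
        linarith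
    _ ≤ (1 + 1 / δ) * (1 + ‖s‖) := by
        have : 0 < 1/δ := by positivity
        nlinarith

theorem stmt_5 (θ₁ θ₂ : ℝ) (hθ₁ : 0 < θ₁) (hθ₂ : 0 < θ₂) :
    ∃ C : ℝ, 0 < C ∧ ∀ (m n : ℕ) (s t : ℂ), s ≠ 0 → t ≠ 0 → OnAxes s → OnAxes t →
      ‖s ^ m * t ^ n *
          (coth (-Complex.I * s * ((θ₁ : ℂ) + (θ₂ : ℂ) * Complex.I)) ^ m *
            coth (-Complex.I * t * ((θ₁ : ℂ) + (θ₂ : ℂ) * Complex.I)) ^ n - 1)‖ ≤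
        C ^ (m + n) * (1 + ‖s‖) ^ m * (1 + ‖t‖) ^ n := by
  set δ := min θ₁ θ₂ with hδdef
  have hδ : 0 < δ := lt_min hθ₁ hθ₂
  set K := 1 + 1 / δ with hKdef
  have hK : 1 ≤ K := by
    rw [hKdef]
    have : 0 < 1/δ := by positivity
    linarith
  refine ⟨2 * K, by linarith, ?_⟩
  intro m n s t hs ht hOs hOt
  set A := coth (-Complex.I * s * ((θ₁ : ℂ) + (θ₂ : ℂ) * Complex.I)) with hA
  set B := coth (-Complex.I * t * ((θ₁ : ℂ) + (θ₂ : ℂ) * Complex.I)) with hB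
  have hsA : ‖s * A‖ ≤ K * (1 + ‖s‖) := key θ₁ θ₂ hθ₁ hθ₂ s hs hOs
  have htB : ‖t * B‖ ≤ K * (1 + ‖t‖) := key θ₁ θ₂ hθ₁ hθ₂ t ht hOt
  have hsabs : ‖s‖ ≤ 1 + ‖s‖ := by linarith [norm_nonneg s]
  have htabs : ‖t‖ ≤ 1 + ‖t‖ := by linarith [norm_nonneg t]
  have h1s : (0:ℝ) ≤ 1 + ‖s‖ := by positivity
  have h1t : (0:ℝ) ≤ 1 + ‖t‖ := by positivity
  by_cases hmn : m + n = 0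
  · obtain ⟨hm, hn⟩ := Nat.add_eq_zero.mp hmn
    subst hm; subst hn
    simp
  · have hmn1 : 1 ≤ m + n := Nat.one_le_iff_ne_zero.mpr hmn
    have step1 : ‖s ^ m * t ^ n * (A ^ m * B ^ n - 1)‖ ≤
        ‖s * A‖ ^ m * ‖t * B‖ ^ n +
        ‖s‖ ^ m * ‖t‖ ^ n := by
      have : s ^ m * t ^ n * (A ^ m * B ^ n - 1) =
          (s * A) ^ m * (t * B) ^ n - s ^ m * t ^ n := by ring
      rw [this]
      calc ‖(s * A) ^ m * (t * B) ^ n - s ^ m * t ^ n‖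
          ≤ ‖(s * A) ^ m * (t * B) ^ n‖ + ‖s ^ m * t ^ n‖ :=
            norm_sub_le _ _
        _ = ‖s * A‖ ^ m * ‖t * B‖ ^ n +
            ‖s‖ ^ m * ‖t‖ ^ n := by
            rw [norm_mul, norm_mul, norm_pow, norm_pow, norm_pow, norm_pow]
    have b1 : ‖s * A‖ ^ m * ‖t * B‖ ^ n ≤
        (K * (1 + ‖s‖)) ^ m * (K * (1 + ‖t‖)) ^ n := by
      gcongr <;> positivity
    have b2 : ‖s‖ ^ m * ‖t‖ ^ n ≤
        (1 + ‖s‖) ^ m * (1 + ‖t‖) ^ n := by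
      gcongr <;> positivity
    refine step1.trans (le_trans (add_le_add b1 b2) ?_)
    have hKpow : (1:ℝ) ≤ K ^ (m + n) := one_le_pow₀ hK
    have h2pow : (2:ℝ) ≤ 2 ^ (m + n) := by
      calc (2:ℝ) = 2 ^ 1 := (pow_one 2).symm
        _ ≤ 2 ^ (m + n) := pow_le_pow_right₀ one_le_two hmn1
    set X : ℝ := (1 + ‖s‖) ^ m * (1 + ‖t‖) ^ n with hXdef
    have hX0 : (0:ℝ) ≤ X := by positivity
    have hKX : (K * (1 + ‖s‖)) ^ m * (K * (1 + ‖t‖)) ^ n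
        = K ^ (m + n) * X := by
      rw [mul_pow, mul_pow, pow_add]; ring
    have hfin : K ^ (m + n) * X + X ≤ (2 * K) ^ (m + n) * X := by
      have : (2 * K) ^ (m + n) = 2 ^ (m + n) * K ^ (m + n) := mul_pow _ _ _
      rw [this]
      nlinarith [mul_nonneg (sub_nonneg.mpr hKpow) hX0,
        mul_nonneg (mul_nonneg (sub_nonneg.mpr h2pow) (le_trans zero_le_one hKpow)) hX0]
    calc (K * (1 + ‖s‖)) ^ m * (K * (1 + ‖t‖)) ^ n +
          (1 + ‖s‖) ^ m * (1 + ‖t‖) ^ n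
        = K ^ (m + n) * X + X := by rw [hKX]
      _ ≤ (2 * K) ^ (m + n) * X := hfin
      _ = (2 * K) ^ (m + n) * (1 + ‖s‖) ^ m * (1 + ‖t‖) ^ n := by
          rw [hXdef]; ring
end

section
/- Let θ ∈ (0, π/2), γ ∈ (0,1) and K > 0 be real numbers. Then there exist a constant C > 0 and r₀ ≥ 1 such that for every real r ≥ r₀, writing σ = r(cos θ + i sin θ), for all integers m, n ≥ 1 and all nonzero complex numbers u, v, each lying on the nonnegative real axis or on the nonnegative imaginary axis and satisfying |u| ≤ K·r^{−γ} and |v| ≤ K·r^{−γ}, one has |u^m · v^n · ( coth(−iuσ)^m · coth(−ivσ)^n − 1 )| ≤ C^{m+n} · r^{−γ(m+n)}. -/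
lemma sinh_le_abs (z : ℂ) : Real.sinh z.re ≤ ‖Complex.sinh z‖ := by
  rw [Complex.sinh, Real.sinh_eq]
  calc (Real.exp z.re - Real.exp (-z.re)) / 2
      = (‖Complex.exp z‖ - ‖Complex.exp (-z)‖) / 2 := by
        rw [Complex.norm_exp, Complex.norm_exp, Complex.neg_re]
    _ ≤ ‖Complex.exp z - Complex.exp (-z)‖ / 2 := by
        gcongr
        simpa using norm_sub_norm_le (Complex.exp z) (Complex.exp (-z))
    _ = ‖(Complex.exp z - Complex.exp (-z)) / 2‖ := by
        rw [norm_div, Complex.norm_two]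

lemma abs_onAxes_re (u : ℂ) (h : u.im = 0 ∧ 0 ≤ u.re) : ‖u‖ = u.re := by
  rw [Complex.norm_def, Complex.normSq_apply, h.1]
  rw [mul_zero, add_zero, ← sq, Real.sqrt_sq h.2]

lemma abs_onAxes_im (u : ℂ) (h : u.re = 0 ∧ 0 ≤ u.im) : ‖u‖ = u.im := by
  rw [Complex.norm_def, Complex.normSq_apply, h.1]
  rw [mul_zero, zero_add, ← sq, Real.sqrt_sq h.2]

lemma factor_bound {θ γ K r : ℝ} (hθ : 0 < θ ∧ θ < Real.pi / 2) (hγ : 0 < γ ∧ γ < 1)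
    (hK : 0 < K) (hr : 1 ≤ r) (u : ℂ) (hu : u ≠ 0) (hax : OnAxes u)
    (hab : ‖u‖ ≤ K * r ^ (-γ)) :
    ‖u * coth (-Complex.I * u *
        ((r : ℂ) * ((Real.cos θ : ℂ) + (Real.sin θ : ℂ) * Complex.I)))‖
      ≤ (K + 1 / min (Real.sin θ) (Real.cos θ)) * r ^ (-γ) := by
  have hr0 : (0 : ℝ) < r := lt_of_lt_of_le one_pos hr
  have hc : 0 < min (Real.sin θ) (Real.cos θ) := by
    refine lt_min (Real.sin_pos_of_pos_of_lt_pi hθ.1 ?_)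
      (Real.cos_pos_of_mem_Ioo ⟨by linarith [Real.pi_pos], hθ.2⟩)
    linarith [Real.pi_pos]
  set c : ℝ := min (Real.sin θ) (Real.cos θ) with hcdef
  have habs0 : 0 < ‖u‖ := norm_pos_iff.mpr hu
  set z : ℂ := -Complex.I * u *
    ((r : ℂ) * ((Real.cos θ : ℂ) + (Real.sin θ : ℂ) * Complex.I)) with hzdef
  have hzre : z.re = u.re * (r * Real.sin θ) + u.im * (r * Real.cos θ) := by
    rw [hzdef]
    simp only [Complex.mul_re, Complex.mul_im, Complex.neg_re, Complex.neg_im, Complex.I_re,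
      Complex.I_im, Complex.add_re, Complex.add_im, Complex.ofReal_re, Complex.ofReal_im]
    ring
  have hlow : c * (‖u‖ * r) ≤ z.re := by
    rcases hax with h | h
    · have ha : ‖u‖ = u.re := abs_onAxes_re u h
      rw [hzre, h.1, ha]
      have h1 : c ≤ Real.sin θ := min_le_left _ _
      have h2 : c * (u.re * r) ≤ Real.sin θ * (u.re * r) :=
        mul_le_mul_of_nonneg_right h1 (mul_nonneg h.2 hr0.le)
      nlinarith [h2]
    · have ha : ‖u‖ = u.im := abs_onAxes_im u h
      rw [hzre, h.1, ha]
      have h1 : c ≤ Real.cos θ := min_le_right _ _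
      have h2 : c * (u.im * r) ≤ Real.cos θ * (u.im * r) :=
        mul_le_mul_of_nonneg_right h1 (mul_nonneg h.2 hr0.le)
      nlinarith [h2]
  have hzpos : 0 < z.re := lt_of_lt_of_le (by positivity) hlow
  have hcoth : ‖coth z‖ ≤ 1 + 1 / (c * (‖u‖ * r)) := by
    refine (abs_coth_le hzpos).trans ?_
    gcongr
  have step1 : ‖u * coth z‖ ≤ ‖u‖ + 1 / (c * r) := by
    rw [norm_mul]
    calc ‖u‖ * ‖coth z‖
        ≤ ‖u‖ * (1 + 1 / (c * (‖u‖ * r))) := by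
          exact mul_le_mul_of_nonneg_left hcoth habs0.le
      _ = ‖u‖ + 1 / (c * r) := by field_simp
  have hrneg : 1 / r ≤ r ^ (-γ) := by
    have h := Real.rpow_le_rpow_of_exponent_le hr (by linarith [hγ.2] : -1 ≤ -γ)
    rw [Real.rpow_neg_one] at h
    rwa [one_div]
  have step2 : 1 / (c * r) ≤ (1 / c) * r ^ (-γ) := by
    rw [one_div, mul_inv, ← one_div, ← one_div]
    have h0 : (0:ℝ) ≤ 1 / c := by positivity
    calc (1/c) * (1/r) ≤ (1/c) * r ^ (-γ) := mul_le_mul_of_nonneg_left hrneg h0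
      _ = (1/c) * r ^ (-γ) := rfl
  calc ‖u * coth z‖ ≤ ‖u‖ + 1 / (c * r) := step1
    _ ≤ K * r ^ (-γ) + (1 / c) * r ^ (-γ) := add_le_add hab step2
    _ = (K + 1 / c) * r ^ (-γ) := by ring

theorem stmt_6 (θ γ K : ℝ) (hθ : 0 < θ ∧ θ < Real.pi / 2) (hγ : 0 < γ ∧ γ < 1) (hK : 0 < K) :
    ∃ C : ℝ, 0 < C ∧ ∃ r₀ : ℝ, 1 ≤ r₀ ∧ ∀ r : ℝ, r₀ ≤ r →
      ∀ (m n : ℕ), 1 ≤ m → 1 ≤ n → ∀ (u v : ℂ), u ≠ 0 → v ≠ 0 → OnAxes u → OnAxes v →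
        ‖u‖ ≤ K * r ^ (-γ) → ‖v‖ ≤ K * r ^ (-γ) →
        ‖(u ^ m * v ^ n *
            (coth (-Complex.I * u * ((r : ℂ) * ((Real.cos θ : ℂ) + (Real.sin θ : ℂ) * Complex.I))) ^ m *
              coth (-Complex.I * v * ((r : ℂ) * ((Real.cos θ : ℂ) + (Real.sin θ : ℂ) * Complex.I))) ^ n
              - 1))‖ ≤
          C ^ (m + n) * r ^ (-(γ * (m + n : ℝ))) := by
  have hc : 0 < min (Real.sin θ) (Real.cos θ) := by
    refine lt_min (Real.sin_pos_of_pos_of_lt_pi hθ.1 ?_)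
      (Real.cos_pos_of_mem_Ioo ⟨by linarith [Real.pi_pos], hθ.2⟩)
    linarith [Real.pi_pos]
  set c : ℝ := min (Real.sin θ) (Real.cos θ) with hcdef
  set M : ℝ := K + 1 / c with hMdef
  have hM0 : 0 < M := by positivity
  have hKM : K ≤ M := by
    have : 0 < 1 / c := by positivity
    simp only [hMdef]; linarith
  refine ⟨2 * M, by positivity, 1, le_refl 1, ?_⟩
  intro r hr m n hm hn u v hu hv haxu haxv habu habv
  have hr0 : (0:ℝ) < r := lt_of_lt_of_le one_pos hr
  set ρ : ℝ := r ^ (-γ) with hρdef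
  have hρ0 : 0 ≤ ρ := by positivity
  set A : ℂ := coth (-Complex.I * u *
      ((r : ℂ) * ((Real.cos θ : ℂ) + (Real.sin θ : ℂ) * Complex.I))) with hAdef
  set B : ℂ := coth (-Complex.I * v *
      ((r : ℂ) * ((Real.cos θ : ℂ) + (Real.sin θ : ℂ) * Complex.I))) with hBdef
  have hbu : ‖u * A‖ ≤ M * ρ := factor_bound hθ hγ hK hr u hu haxu habu
  have hbv : ‖v * B‖ ≤ M * ρ := factor_bound hθ hγ hK hr v hv haxv habv
  have hrw : u ^ m * v ^ n * (A ^ m * B ^ n - 1)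
      = (u * A) ^ m * (v * B) ^ n - u ^ m * v ^ n := by
    rw [mul_pow, mul_pow]; ring
  rw [hrw]
  have hMρ0 : 0 ≤ M * ρ := by positivity
  have hKρ0 : 0 ≤ K * ρ := by positivity
  calc ‖(u * A) ^ m * (v * B) ^ n - u ^ m * v ^ n‖
      ≤ ‖(u * A) ^ m * (v * B) ^ n‖ + ‖u ^ m * v ^ n‖ := by
        simpa using norm_sub_le ((u * A) ^ m * (v * B) ^ n) (u ^ m * v ^ n)
    _ ≤ (M * ρ) ^ m * (M * ρ) ^ n + (K * ρ) ^ m * (K * ρ) ^ n := by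
        rw [norm_mul, norm_mul, norm_pow, norm_pow, norm_pow, norm_pow]
        gcongr
    _ = M ^ (m + n) * ρ ^ (m + n) + K ^ (m + n) * ρ ^ (m + n) := by
        rw [← pow_add, ← pow_add, mul_pow, mul_pow]
    _ ≤ 2 * (M ^ (m + n) * ρ ^ (m + n)) := by
        have h1 : K ^ (m + n) ≤ M ^ (m + n) := pow_le_pow_left₀ hK.le hKM _
        have h2 : 0 ≤ ρ ^ (m + n) := by positivity
        nlinarith [pow_nonneg hM0.le (m + n)]
    _ ≤ (2 * M) ^ (m + n) * ρ ^ (m + n) := by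
        rw [mul_pow]
        have h2 : (2:ℝ) ≤ 2 ^ (m + n) := by
          calc (2:ℝ) = 2 ^ 1 := (pow_one 2).symm
            _ ≤ 2 ^ (m + n) := pow_le_pow_right₀ one_le_two (by omega)
        have h3 : 0 ≤ M ^ (m + n) * ρ ^ (m + n) := by positivity
        nlinarith
    _ = (2 * M) ^ (m + n) * r ^ (-(γ * (m + n : ℝ))) := by
        congr 1
        rw [hρdef, ← Real.rpow_natCast (r ^ (-γ)) (m + n), ← Real.rpow_mul hr0.le]
        congr 1
        push_cast
        ring
end

section
/- Let θ ∈ (0, π/2), γ ∈ (0,1) and K > 0 be real numbers. Then there exist a constant C > 0 and r₀ ≥ 1 such that for every real r ≥ r₀, writing σ = r(cos θ + i sin θ), for all integers m, n ≥ 1 and all complex numbers u, v, each lying on the nonnegative real axis or on the nonnegative imaginary axis and satisfying |u| ≤ K·r^{−γ} and |v| ≤ K·r^{−γ}, one has |u^m · v^n · ( tanh(−iuσ)^m · tanh(−ivσ)^n − 1 )| ≤ C^{m+n} · r^{−γ(m+n)}. -/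
section Aux

private lemma sq_abs_cosh' (x y : ℝ) :
    ‖(Complex.cosh (x + y * Complex.I))‖ ^ 2 = Real.sinh x ^ 2 + Real.cos y ^ 2 := by
  rw [Complex.cosh_add, Complex.cosh_mul_I, Complex.sinh_mul_I, Complex.sq_norm]
  simp [Complex.normSq_apply, Complex.cosh_ofReal_re, Complex.cosh_ofReal_im,
    Complex.sinh_ofReal_re, Complex.sinh_ofReal_im, Complex.cos_ofReal_re,
    Complex.sin_ofReal_re, Complex.mul_re, Complex.mul_im]
  nlinarith [Real.sin_sq_add_cos_sq y, Real.cosh_sq x]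

private lemma sq_abs_sinh' (x y : ℝ) :
    ‖(Complex.sinh (x + y * Complex.I))‖ ^ 2 = Real.sinh x ^ 2 + Real.sin y ^ 2 := by
  rw [Complex.sinh_add, Complex.cosh_mul_I, Complex.sinh_mul_I, Complex.sq_norm]
  simp [Complex.normSq_apply, Complex.cosh_ofReal_re, Complex.cosh_ofReal_im,
    Complex.sinh_ofReal_re, Complex.sinh_ofReal_im, Complex.cos_ofReal_re,
    Complex.sin_ofReal_re, Complex.mul_re, Complex.mul_im]
  nlinarith [Real.sin_sq_add_cos_sq y, Real.cosh_sq x]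

private lemma tanh_sector_bound (L : ℝ) (hL : 0 < L) (z : ℂ) (hx : 0 ≤ z.re)
    (hy : |z.im| ≤ L * z.re) :
    ‖(Complex.tanh z)‖ ≤ Real.sqrt 2 + 1 + 1 / Real.sinh (Real.pi / (4 * L)) := by
  set x := z.re with hxdef
  set y := z.im with hydef
  have hz : z = (x : ℂ) + (y : ℂ) * Complex.I := (Complex.re_add_im z).symm
  set x₀ : ℝ := Real.pi / (4 * L) with hx0
  have hx0pos : 0 < x₀ := by positivity
  have hsinh0 : 0 < Real.sinh x₀ := Real.sinh_pos_iff.mpr hx0pos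
  have hA : ‖(Complex.sinh z)‖ ^ 2 = Real.sinh x ^ 2 + Real.sin y ^ 2 := by
    rw [hz]; exact sq_abs_sinh' x y
  have hB : ‖(Complex.cosh z)‖ ^ 2 = Real.sinh x ^ 2 + Real.cos y ^ 2 := by
    rw [hz]; exact sq_abs_cosh' x y
  have habs : ‖(Complex.tanh z)‖
      = ‖(Complex.sinh z)‖ / ‖(Complex.cosh z)‖ := by
    rw [Complex.tanh_eq_sinh_div_cosh, norm_div]
  set A := ‖(Complex.sinh z)‖ with hAd
  set B := ‖(Complex.cosh z)‖ with hBd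
  have hA0 : 0 ≤ A := norm_nonneg _
  have hB0 : 0 ≤ B := norm_nonneg _
  rw [habs]
  rcases le_or_gt |y| (Real.pi / 4) with hc | hc
  · have hcos : Real.sqrt 2 / 2 ≤ Real.cos y := by
      rw [← Real.cos_abs y]
      calc Real.sqrt 2 / 2 = Real.cos (Real.pi / 4) := (Real.cos_pi_div_four).symm
        _ ≤ Real.cos |y| := Real.cos_le_cos_of_nonneg_of_le_pi (abs_nonneg y)
            (by linarith [Real.pi_pos]) hc
    have hcos2 : (1:ℝ)/2 ≤ Real.cos y ^ 2 := by
      nlinarith [Real.sq_sqrt (show (0:ℝ) ≤ 2 by norm_num), Real.sqrt_nonneg 2]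
    have hB2 : 0 < B ^ 2 := by rw [hB]; nlinarith [sq_nonneg (Real.sinh x)]
    have hBpos : 0 < B := by
      rcases hB0.lt_or_eq with h | h
      · exact h
      · exfalso; rw [← h] at hB2; simp at hB2
    rw [div_le_iff₀ hBpos]
    have hAB : A ^ 2 ≤ 2 * B ^ 2 := by
      rw [hA, hB]
      nlinarith [Real.sin_sq_add_cos_sq y, sq_nonneg (Real.sinh x)]
    have hAle : A ≤ Real.sqrt 2 * B := by
      have h1 : A = Real.sqrt (A ^ 2) := (Real.sqrt_sq hA0).symm
      rw [h1]
      calc Real.sqrt (A ^ 2) ≤ Real.sqrt (2 * B ^ 2) := Real.sqrt_le_sqrt hAB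
        _ = Real.sqrt 2 * B := by
            rw [Real.sqrt_mul (by norm_num : (0:ℝ) ≤ 2), Real.sqrt_sq hB0]
    have hexp : (Real.sqrt 2 + 1 + 1 / Real.sinh x₀) * B
        = Real.sqrt 2 * B + (1 + 1 / Real.sinh x₀) * B := by ring
    have h10 : 0 ≤ (1 + 1 / Real.sinh x₀) * B := by positivity
    linarith
  · have hxge : x₀ ≤ x := by
      have hπ : Real.pi / 4 < L * x := lt_of_lt_of_le hc hy
      rw [hx0, div_le_iff₀ (by positivity)]
      calc Real.pi = 4 * (Real.pi / 4) := by ring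
        _ ≤ 4 * (L * x) := by linarith
        _ = x * (4 * L) := by ring
    have hsx : Real.sinh x₀ ≤ Real.sinh x := Real.sinh_le_sinh.mpr hxge
    have hsxpos : 0 < Real.sinh x := lt_of_lt_of_le hsinh0 hsx
    have hB2 : 0 < B ^ 2 := by rw [hB]; nlinarith [sq_nonneg (Real.cos y)]
    have hBpos : 0 < B := by
      rcases hB0.lt_or_eq with h | h
      · exact h
      · exfalso; rw [← h] at hB2; simp at hB2
    rw [div_le_iff₀ hBpos]
    have hAc : A ≤ Real.cosh x := by
      have h1 : A = Real.sqrt (A ^ 2) := (Real.sqrt_sq hA0).symm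
      rw [h1]
      calc Real.sqrt (A ^ 2) ≤ Real.sqrt (Real.cosh x ^ 2) := by
            apply Real.sqrt_le_sqrt
            rw [hA]
            nlinarith [Real.sin_sq_le_one y, Real.cosh_sq x]
        _ = Real.cosh x := Real.sqrt_sq (Real.cosh_pos x).le
    have hBs : Real.sinh x ≤ B := by
      have h1 : Real.sinh x = Real.sqrt (Real.sinh x ^ 2) :=
        (Real.sqrt_sq hsxpos.le).symm
      rw [h1]
      calc Real.sqrt (Real.sinh x ^ 2) ≤ Real.sqrt (B ^ 2) := by
            apply Real.sqrt_le_sqrt; rw [hB]; nlinarith [sq_nonneg (Real.cos y)]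
        _ = B := Real.sqrt_sq hB0
    have hcs : Real.cosh x ≤ Real.sinh x + 1 := by
      have h1 := Real.cosh_sub_sinh x
      have h2 : Real.exp (-x) ≤ 1 := Real.exp_le_one_iff.mpr (by
        have : 0 < x := lt_of_lt_of_le hx0pos hxge
        linarith)
      linarith
    have h1B : 1 ≤ B / Real.sinh x₀ := by
      rw [le_div_iff₀ hsinh0]; linarith
    have hexp : (Real.sqrt 2 + 1 + 1 / Real.sinh x₀) * B
        = Real.sqrt 2 * B + B + B / Real.sinh x₀ := by ring
    have h10 : 0 ≤ Real.sqrt 2 * B := by positivity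
    linarith

end Aux

private lemma axes_sector (θ : ℝ) (hθ1 : 0 < θ) (hθ2 : θ < Real.pi / 2) (r : ℝ) (hr : 0 ≤ r)
    (u : ℂ) (hu : OnAxes u) :
    0 ≤ (-Complex.I * u * ((r : ℂ) * ((Real.cos θ : ℂ) + (Real.sin θ : ℂ) * Complex.I))).re ∧
    |(-Complex.I * u * ((r : ℂ) * ((Real.cos θ : ℂ) + (Real.sin θ : ℂ) * Complex.I))).im|
      ≤ (Real.cos θ / Real.sin θ + Real.sin θ / Real.cos θ) *
        (-Complex.I * u * ((r : ℂ) * ((Real.cos θ : ℂ) + (Real.sin θ : ℂ) * Complex.I))).re := by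
  have hs : 0 < Real.sin θ := Real.sin_pos_of_pos_of_lt_pi hθ1 (by linarith [Real.pi_pos])
  have hc : 0 < Real.cos θ := Real.cos_pos_of_mem_Ioo ⟨by linarith [Real.pi_pos], hθ2⟩
  have hre : (-Complex.I * u * ((r : ℂ) * ((Real.cos θ : ℂ) + (Real.sin θ : ℂ) * Complex.I))).re
      = u.im * r * Real.cos θ + u.re * r * Real.sin θ := by
    simp [Complex.mul_re, Complex.mul_im, Complex.cos_ofReal_re, Complex.sin_ofReal_re]
    ring
  have him : (-Complex.I * u * ((r : ℂ) * ((Real.cos θ : ℂ) + (Real.sin θ : ℂ) * Complex.I))).im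
      = u.im * r * Real.sin θ - u.re * r * Real.cos θ := by
    simp [Complex.mul_re, Complex.mul_im, Complex.cos_ofReal_re, Complex.sin_ofReal_re]
    ring
  rw [hre, him]
  rcases hu with ⟨hb, ha⟩ | ⟨ha, hb⟩
  · rw [hb]
    constructor
    · simp; positivity
    · have h1 : |0 * r * Real.sin θ - u.re * r * Real.cos θ| = u.re * r * Real.cos θ := by
        rw [abs_of_nonpos (by nlinarith [mul_nonneg (mul_nonneg ha hr) hc.le])]; ring
      rw [h1]
      have h2 : (Real.cos θ / Real.sin θ + Real.sin θ / Real.cos θ) *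
          (0 * r * Real.cos θ + u.re * r * Real.sin θ)
          = u.re * r * Real.cos θ + (Real.sin θ / Real.cos θ) * (u.re * r * Real.sin θ) := by
        field_simp; ring
      rw [h2]
      have : 0 ≤ (Real.sin θ / Real.cos θ) * (u.re * r * Real.sin θ) := by positivity
      linarith
  · rw [ha]
    constructor
    · simp; positivity
    · have h1 : |u.im * r * Real.sin θ - 0 * r * Real.cos θ| = u.im * r * Real.sin θ := by
        rw [abs_of_nonneg (by nlinarith [mul_nonneg (mul_nonneg hb hr) hs.le])]; ring_nf
      rw [h1]
      have h2 : (Real.cos θ / Real.sin θ + Real.sin θ / Real.cos θ) *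
          (u.im * r * Real.cos θ + 0 * r * Real.sin θ)
          = u.im * r * Real.sin θ + (Real.cos θ / Real.sin θ) * (u.im * r * Real.cos θ) := by
        field_simp; ring
      rw [h2]
      have : 0 ≤ (Real.cos θ / Real.sin θ) * (u.im * r * Real.cos θ) := by positivity
      linarith

theorem stmt_7 (θ γ K : ℝ) (hθ : 0 < θ ∧ θ < Real.pi / 2) (hγ : 0 < γ ∧ γ < 1) (hK : 0 < K) :
    ∃ C : ℝ, 0 < C ∧ ∃ r₀ : ℝ, 1 ≤ r₀ ∧ ∀ r : ℝ, r₀ ≤ r →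
      ∀ (m n : ℕ), 1 ≤ m → 1 ≤ n → ∀ (u v : ℂ), OnAxes u → OnAxes v →
        ‖u‖ ≤ K * r ^ (-γ) → ‖v‖ ≤ K * r ^ (-γ) →
        ‖(u ^ m * v ^ n *
            (Complex.tanh (-Complex.I * u * ((r : ℂ) * ((Real.cos θ : ℂ) + (Real.sin θ : ℂ) * Complex.I))) ^ m *
              Complex.tanh (-Complex.I * v * ((r : ℂ) * ((Real.cos θ : ℂ) + (Real.sin θ : ℂ) * Complex.I))) ^ n
              - 1))‖ ≤
          C ^ (m + n) * r ^ (-(γ * (m + n : ℝ))) := by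
  obtain ⟨hθ1, hθ2⟩ := hθ
  have hs : 0 < Real.sin θ := Real.sin_pos_of_pos_of_lt_pi hθ1 (by linarith [Real.pi_pos])
  have hc : 0 < Real.cos θ := Real.cos_pos_of_mem_Ioo ⟨by linarith [Real.pi_pos], hθ2⟩
  set L : ℝ := Real.cos θ / Real.sin θ + Real.sin θ / Real.cos θ with hLdef
  have hL : 0 < L := by positivity
  set M : ℝ := Real.sqrt 2 + 1 + 1 / Real.sinh (Real.pi / (4 * L)) with hMdef
  have hsinh0 : 0 < Real.sinh (Real.pi / (4 * L)) := Real.sinh_pos_iff.mpr (by positivity)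
  have hM1 : 1 ≤ M := by
    have : 0 ≤ Real.sqrt 2 := Real.sqrt_nonneg 2
    have : 0 ≤ 1 / Real.sinh (Real.pi / (4 * L)) := by positivity
    simp only [hMdef]; linarith [Real.sqrt_nonneg 2]
  have hM0 : 0 < M := lt_of_lt_of_le one_pos hM1
  refine ⟨2 * M * K, by positivity, 1, le_refl 1, ?_⟩
  intro r hr m n hm hn u v hu hv hub hvb
  have hr0 : (0:ℝ) < r := lt_of_lt_of_le one_pos hr
  set σ : ℂ := (r : ℂ) * ((Real.cos θ : ℂ) + (Real.sin θ : ℂ) * Complex.I) with hσ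
  set T₁ : ℂ := Complex.tanh (-Complex.I * u * σ) with hT1
  set T₂ : ℂ := Complex.tanh (-Complex.I * v * σ) with hT2
  -- bounds on tanh
  have hT1b : ‖T₁‖ ≤ M := by
    obtain ⟨h1, h2⟩ := axes_sector θ hθ1 hθ2 r hr0.le u hu
    exact tanh_sector_bound L hL _ h1 h2
  have hT2b : ‖T₂‖ ≤ M := by
    obtain ⟨h1, h2⟩ := axes_sector θ hθ1 hθ2 r hr0.le v hv
    exact tanh_sector_bound L hL _ h1 h2
  set a : ℝ := K * r ^ (-γ) with ha
  have ha0 : 0 < a := by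
    have : (0:ℝ) < r ^ (-γ) := Real.rpow_pos_of_pos hr0 _
    positivity
  -- main chain
  have key : ‖(u ^ m * v ^ n * (T₁ ^ m * T₂ ^ n - 1))‖
      ≤ a ^ (m + n) * (2 ^ (m + n) * M ^ (m + n)) := by
    rw [norm_mul, norm_mul, norm_pow, norm_pow]
    have hD : ‖(T₁ ^ m * T₂ ^ n - 1)‖ ≤ 2 ^ (m + n) * M ^ (m + n) := by
      calc ‖(T₁ ^ m * T₂ ^ n - 1)‖
          ≤ ‖(T₁ ^ m * T₂ ^ n)‖ + ‖1‖ :=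
            norm_sub_le _ _
        _ = ‖T₁‖ ^ m * ‖T₂‖ ^ n + 1 := by
            rw [norm_mul, norm_pow, norm_pow, norm_one]
        _ ≤ M ^ m * M ^ n + 1 := by
            have h1 : ‖T₁‖ ^ m ≤ M ^ m :=
              pow_le_pow_left₀ (norm_nonneg _) hT1b m
            have h2 : ‖T₂‖ ^ n ≤ M ^ n :=
              pow_le_pow_left₀ (norm_nonneg _) hT2b n
            have h3 : 0 ≤ ‖T₁‖ ^ m := by positivity
            nlinarith [pow_nonneg (le_trans zero_le_one hM1) n]
        _ = M ^ (m + n) + 1 := by rw [pow_add]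
        _ ≤ 2 * M ^ (m + n) := by
            have : (1:ℝ) ≤ M ^ (m + n) := by
              calc (1:ℝ) = 1 ^ (m + n) := (one_pow _).symm
                _ ≤ M ^ (m + n) := pow_le_pow_left₀ zero_le_one hM1 _
            linarith
        _ ≤ 2 ^ (m + n) * M ^ (m + n) := by
            have h4 : (2:ℝ) ≤ 2 ^ (m + n) := by
              calc (2:ℝ) = 2 ^ 1 := (pow_one 2).symm
                _ ≤ 2 ^ (m + n) := pow_le_pow_right₀ one_le_two (by omega)
            have : (0:ℝ) ≤ M ^ (m + n) := by positivity
            nlinarith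
    have huv : ‖u‖ ^ m * ‖v‖ ^ n ≤ a ^ (m + n) := by
      rw [pow_add]
      exact mul_le_mul (pow_le_pow_left₀ (norm_nonneg _) hub m)
        (pow_le_pow_left₀ (norm_nonneg _) hvb n) (by positivity) (by positivity)
    exact mul_le_mul huv hD (norm_nonneg _) (by positivity)
  refine key.trans (le_of_eq ?_)
  have hrpow : (r ^ (-γ) : ℝ) ^ (m + n) = r ^ (-(γ * (m + n : ℝ))) := by
    rw [← Real.rpow_natCast (r ^ (-γ)) (m + n), ← Real.rpow_mul hr0.le]
    congr 1
    push_cast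
    ring
  rw [ha, mul_pow, hrpow]
  rw [mul_pow, mul_pow]
  ring
end

section
/- Let k > 0, δ ∈ (0, k) and θ ∈ (0, π/2) be real numbers. For t ≥ 0 define the complex number w(t) by w(t) = √(k² − t²) (nonnegative real square root) if t ≤ k, and w(t) = i·√(t² − k²) if t > k. Then there exist constants c > 0, C > 0 and r₀ > 0 such that for every real r ≥ r₀ and every real t ≥ 0 with |t − k| ≥ δ, writing σ = r(cos θ + i sin θ), one has |2·w(t) / (exp(−i·w(t)·σ) − 1)| ≤ C · exp(−c·√(kδ)·r). -/
/-- The square root `√(k² − t²)` taken with nonnegative real and imaginary parts. -/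
noncomputable def sqrtBranch (k t : ℝ) : ℂ :=
  if t ≤ k then (Real.sqrt (k ^ 2 - t ^ 2) : ℂ)
  else Complex.I * (Real.sqrt (t ^ 2 - k ^ 2) : ℂ)

lemma denomB (z : ℂ) (h : 1 ≤ z.re) :
    (1 - Real.exp (-1)) * Real.exp z.re ≤ ‖Complex.exp z - 1‖ := by
  have h1 : ‖Complex.exp z‖ - ‖(1 : ℂ)‖ ≤ ‖Complex.exp z - 1‖ := by
    simpa using norm_sub_norm_le (Complex.exp z) 1
  rw [Complex.norm_exp] at h1
  simp only [norm_one] at h1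
  have h2 : (1 : ℝ) ≤ Real.exp (z.re - 1) := Real.one_le_exp (by linarith)
  have h3 : Real.exp (z.re - 1) = Real.exp z.re * Real.exp (-1) := by
    rw [← Real.exp_add]; ring_nf
  nlinarith [Real.exp_pos z.re]

lemma fracB (A : ℝ) (hA : 0 ≤ A) (z : ℂ) (h : 1 ≤ z.re) (num : ℂ)
    (hnum : ‖num‖ = 2 * A) :
    ‖num / (Complex.exp z - 1)‖ ≤ 2 * A * Real.exp (-z.re) / (1 - Real.exp (-1)) := by
  have hD : 0 < 1 - Real.exp (-1) := by
    have : Real.exp (-1) < Real.exp 0 := Real.exp_lt_exp.2 (by norm_num)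
    simpa using this
  have hden := denomB z h
  have hdenpos : 0 < (1 - Real.exp (-1)) * Real.exp z.re := by positivity
  rw [norm_div, hnum]
  have habs : 0 < ‖Complex.exp z - 1‖ := lt_of_lt_of_le hdenpos hden
  rw [div_le_div_iff₀ habs hD]
  have hid : Real.exp (-z.re) * Real.exp z.re = 1 := by
    rw [← Real.exp_add]; simp
  have h4 : 2 * A * Real.exp (-z.re) * ((1 - Real.exp (-1)) * Real.exp z.re)
      = 2 * A * (1 - Real.exp (-1)) := by
    have : 2 * A * Real.exp (-z.re) * ((1 - Real.exp (-1)) * Real.exp z.re)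
        = 2 * A * (1 - Real.exp (-1)) * (Real.exp (-z.re) * Real.exp z.re) := by ring
    rw [this, hid, mul_one]
  have h5 := mul_le_mul_of_nonneg_left hden
    (by positivity : (0 : ℝ) ≤ 2 * A * Real.exp (-z.re))
  linarith

set_option maxHeartbeats 1000000 in
theorem stmt_10 (k δ θ : ℝ) (hk : 0 < k) (hδ : 0 < δ ∧ δ < k) (hθ : 0 < θ ∧ θ < Real.pi / 2) :
    ∃ c C r₀ : ℝ, 0 < c ∧ 0 < C ∧ 0 < r₀ ∧ ∀ r : ℝ, r₀ ≤ r → ∀ t : ℝ, 0 ≤ t → δ ≤ |t - k| →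
      ‖(2 * sqrtBranch k t /
          (Complex.exp (-Complex.I * sqrtBranch k t *
            ((r : ℂ) * ((Real.cos θ : ℂ) + (Real.sin θ : ℂ) * Complex.I))) - 1))‖ ≤
        C * Real.exp (-c * Real.sqrt (k * δ) * r) := by
  obtain ⟨hδ0, hδk⟩ := hδ
  obtain ⟨hθ0, hθ2⟩ := hθ
  have hpi := Real.pi_pos
  set s := Real.sin θ with hs_def
  set co := Real.cos θ with hco_def
  have hs : 0 < s := Real.sin_pos_of_pos_of_lt_pi hθ0 (by linarith)
  have hco : 0 < co := Real.cos_pos_of_mem_Ioo ⟨by linarith, hθ2⟩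
  set S := Real.sqrt (k * δ) with hS_def
  have hS : 0 < S := Real.sqrt_pos.2 (by positivity)
  have hD : 0 < 1 - Real.exp (-1) := by
    have : Real.exp (-1) < Real.exp 0 := Real.exp_lt_exp.2 (by norm_num)
    simpa using this
  refine ⟨min s co / 2, (2 * k + 2) / (1 - Real.exp (-1)),
    max (max (1 / (S * s)) (1 / (S * co))) (2 / co), by positivity, by positivity, by positivity,
    ?_⟩
  intro r hr t ht hdt
  set c := min s co / 2 with hc_def
  have hc0 : 0 < c := by positivity
  have hcs : c ≤ s := by
    have := min_le_left s co
    simp only [hc_def]; linarith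
  have hcco2 : c ≤ co / 2 := by
    have := min_le_right s co
    simp only [hc_def]; linarith
  have hr1 : 1 / (S * s) ≤ r := le_trans (le_trans (le_max_left _ _) (le_max_left _ _)) hr
  have hr2 : 1 / (S * co) ≤ r := le_trans (le_trans (le_max_right _ _) (le_max_left _ _)) hr
  have hr3 : 2 / co ≤ r := le_trans (le_max_right _ _) hr
  have hrpos : 0 < r := lt_of_lt_of_le (by positivity) hr3
  rcases le_or_gt t k with htk | htk
  · -- t ≤ k, so t ≤ k - δ
    have htk' : t ≤ k - δ := by
      rw [abs_sub_comm, abs_of_nonneg (by linarith)] at hdt; linarith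
    set a := Real.sqrt (k ^ 2 - t ^ 2) with ha_def
    have ha0 : 0 ≤ a := Real.sqrt_nonneg _
    have hSa : S ≤ a := Real.sqrt_le_sqrt (by nlinarith)
    have hak : a ≤ k := by
      rw [ha_def]
      calc Real.sqrt (k ^ 2 - t ^ 2) ≤ Real.sqrt (k ^ 2) := Real.sqrt_le_sqrt (by nlinarith)
        _ = k := by rw [Real.sqrt_sq hk.le]
    have hw : sqrtBranch k t = (a : ℂ) := by rw [sqrtBranch, if_pos htk]
    rw [hw]
    set z := -Complex.I * (a : ℂ) * ((r : ℂ) * ((co : ℂ) + (s : ℂ) * Complex.I)) with hz_def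
    have hzre : z.re = a * r * s := by
      simp [hz_def, Complex.mul_re, Complex.mul_im]
      ring
    have hR1 : 1 ≤ z.re := by
      rw [hzre]
      have h1 : 1 ≤ S * s * r := by
        rw [div_le_iff₀ (by positivity)] at hr1; linarith
      nlinarith
    have hRc : c * S * r ≤ z.re := by
      rw [hzre]
      have : c * S ≤ s * a := by nlinarith
      nlinarith
    have key := fracB a ha0 z hR1 (2 * (a : ℂ))
      (by rw [norm_mul, Complex.norm_two, Complex.norm_real, Real.norm_eq_abs, abs_of_nonneg ha0])
    refine le_trans key ?_
    rw [div_mul_eq_mul_div]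
    apply div_le_div_of_nonneg_right ?_ hD.le
    have hexp : Real.exp (-z.re) ≤ Real.exp (-(c * S * r)) := Real.exp_le_exp.2 (by linarith)
    have heq : -c * S * r = -(c * S * r) := by ring
    rw [heq]
    nlinarith [Real.exp_pos (-z.re), Real.exp_pos (-(c * S * r))]
  · -- t > k, so t ≥ k + δ
    have htk' : k + δ ≤ t := by
      rw [abs_of_nonneg (by linarith)] at hdt; linarith
    set b := Real.sqrt (t ^ 2 - k ^ 2) with hb_def
    have hb0 : 0 ≤ b := Real.sqrt_nonneg _
    have hSb : S ≤ b := Real.sqrt_le_sqrt (by nlinarith)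
    have hw : sqrtBranch k t = Complex.I * (b : ℂ) := by rw [sqrtBranch, if_neg (not_le.2 htk)]
    rw [hw]
    set z := -Complex.I * (Complex.I * (b : ℂ)) * ((r : ℂ) * ((co : ℂ) + (s : ℂ) * Complex.I))
      with hz_def
    have hzre : z.re = b * r * co := by
      simp [hz_def, Complex.mul_re, Complex.mul_im]
      ring
    have hR1 : 1 ≤ z.re := by
      rw [hzre]
      have h1 : 1 ≤ S * co * r := by
        rw [div_le_iff₀ (by positivity)] at hr2; linarith
      nlinarith
    set m := r * co / 2 with hm_def
    have hm1 : 1 ≤ m := by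
      rw [hm_def]
      rw [div_le_iff₀ hco] at hr3; linarith
    have hbm : b ≤ Real.exp (b * m) := by
      have h1 : b + 1 ≤ Real.exp b := Real.add_one_le_exp b
      have h2 : Real.exp b ≤ Real.exp (b * m) := Real.exp_le_exp.2 (by nlinarith)
      linarith
    have hbemm : b * Real.exp (-(b * m)) ≤ 1 := by
      have h := mul_le_mul_of_nonneg_right hbm (Real.exp_pos (-(b * m))).le
      rw [← Real.exp_add] at h
      simpa using h
    have hRmm : z.re = b * m + b * m := by rw [hzre, hm_def]; ring
    have hcm : c * S * r ≤ b * m := by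
      have : c * S ≤ (co / 2) * b := by nlinarith
      rw [hm_def]; nlinarith
    have key := fracB b hb0 z hR1 (2 * (Complex.I * (b : ℂ)))
      (by rw [norm_mul, Complex.norm_two, norm_mul, Complex.norm_I, Complex.norm_real,
        Real.norm_eq_abs, abs_of_nonneg hb0, one_mul])
    refine le_trans key ?_
    rw [div_mul_eq_mul_div]
    apply div_le_div_of_nonneg_right ?_ hD.le
    have hsplit : Real.exp (-z.re) = Real.exp (-(b * m)) * Real.exp (-(b * m)) := by
      rw [← Real.exp_add, hRmm]; ring_nf
    have hexp : Real.exp (-(b * m)) ≤ Real.exp (-(c * S * r)) := Real.exp_le_exp.2 (by linarith)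
    have heq : -c * S * r = -(c * S * r) := by ring
    rw [heq, hsplit]
    nlinarith [Real.exp_pos (-(b * m)), Real.exp_pos (-(c * S * r))]
end

section
/- Let k > 0, δ ∈ (0, k) and θ ∈ (0, π/2) be real numbers. For t ≥ 0 define the complex number w(t) by w(t) = √(k² − t²) (nonnegative real square root) if t ≤ k, and w(t) = i·√(t² − k²) if t > k. Then there exist constants c > 0, C > 0 and r₀ > 0 such that for every real r ≥ r₀ and every real t ≥ 0 with |t − k| ≥ δ, writing σ = r(cos θ + i sin θ), one has |2·w(t) / (exp(−i·w(t)·σ) + 1)| ≤ C · exp(−c·√(kδ)·r). -/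
private lemma aux_re1 (W r c s : ℝ) :
    (-Complex.I * (W : ℂ) * ((r : ℂ) * ((c : ℂ) + (s : ℂ) * Complex.I))).re = W * r * s := by
  simp [Complex.mul_re, Complex.mul_im]
  ring

private lemma aux_re2 (S r c s : ℝ) :
    (-Complex.I * (Complex.I * (S : ℂ)) * ((r : ℂ) * ((c : ℂ) + (s : ℂ) * Complex.I))).re
      = S * r * c := by
  simp [Complex.mul_re, Complex.mul_im]
  ring

private lemma aux_div (w X : ℂ) (h : Real.log 2 ≤ X.re) :
    ‖2 * w / (Complex.exp X + 1)‖ ≤ 4 * ‖w‖ * Real.exp (-X.re) := by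
  have he : ‖Complex.exp X‖ = Real.exp X.re := Complex.norm_exp X
  have h2 : (2 : ℝ) ≤ Real.exp X.re := by
    rw [← Real.exp_log two_pos]; exact Real.exp_le_exp.mpr h
  have htri : ‖Complex.exp X‖ ≤ ‖Complex.exp X + 1‖ + 1 := by
    calc ‖Complex.exp X‖ = ‖(Complex.exp X + 1) + (-1)‖ := by
          congr 1; ring
      _ ≤ ‖Complex.exp X + 1‖ + ‖(-1 : ℂ)‖ := norm_add_le _ _
      _ = ‖Complex.exp X + 1‖ + 1 := by simp
  have hden : Real.exp X.re / 2 ≤ ‖Complex.exp X + 1‖ := by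
    rw [he] at htri; linarith
  have hpos : 0 < ‖Complex.exp X + 1‖ :=
    lt_of_lt_of_le (by positivity) hden
  rw [norm_div, norm_mul, div_le_iff₀ hpos]
  have key : 4 * ‖w‖ * Real.exp (-X.re) * (Real.exp X.re / 2)
      = 2 * ‖w‖ := by
    rw [Real.exp_neg]
    field_simp
    ring
  have hmul := mul_le_mul_of_nonneg_left hden
    (by positivity : (0 : ℝ) ≤ 4 * ‖w‖ * Real.exp (-X.re))
  rw [key] at hmul
  simpa using hmul

private lemma aux_exp_bound (a x : ℝ) (ha : 0 < a) (hx : 0 ≤ x) :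
    x * Real.exp (-(a * x)) ≤ 1 / a := by
  have h1 : a * x ≤ Real.exp (a * x) := by
    have := Real.add_one_le_exp (a * x); linarith
  have h2 : Real.exp (-(a * x)) * Real.exp (a * x) = 1 := by
    rw [← Real.exp_add]; simp
  have hE := Real.exp_pos (-(a * x))
  rw [le_div_iff₀ ha]
  nlinarith [mul_le_mul_of_nonneg_left h1 hE.le]

set_option maxHeartbeats 1000000 in
theorem stmt_11 (k δ θ : ℝ) (hk : 0 < k) (hδ : 0 < δ ∧ δ < k) (hθ : 0 < θ ∧ θ < Real.pi / 2) :
    ∃ c C r₀ : ℝ, 0 < c ∧ 0 < C ∧ 0 < r₀ ∧ ∀ r : ℝ, r₀ ≤ r → ∀ t : ℝ, 0 ≤ t → δ ≤ |t - k| →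
      ‖2 * sqrtBranch k t /
          (Complex.exp (-Complex.I * sqrtBranch k t *
            ((r : ℂ) * ((Real.cos θ : ℂ) + (Real.sin θ : ℂ) * Complex.I))) + 1)‖ ≤
        C * Real.exp (-c * Real.sqrt (k * δ) * r) := by
  obtain ⟨hδ0, hδk⟩ := hδ
  obtain ⟨hθ0, hθp⟩ := hθ
  have hπ := Real.pi_pos
  have hs : 0 < Real.sin θ := Real.sin_pos_of_pos_of_lt_pi hθ0 (by linarith)
  have hc : 0 < Real.cos θ := Real.cos_pos_of_mem_Ioo ⟨by linarith, hθp⟩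
  set sθ := Real.sin θ with hsθ
  set cθ := Real.cos θ with hcθ
  set μ := min sθ cθ with hμdef
  have hμ : 0 < μ := lt_min hs hc
  have hμs : μ ≤ sθ := min_le_left _ _
  have hμc : μ ≤ cθ := min_le_right _ _
  set K := Real.sqrt (k * δ) with hKdef
  have hK : 0 < K := Real.sqrt_pos.mpr (by positivity)
  have hl2 : 0 < Real.log 2 := Real.log_pos one_lt_two
  set r₀ := Real.log 2 / (μ * K) + 1 with hr₀def
  have hr₀ : 0 < r₀ := by
    have h : 0 ≤ Real.log 2 / (μ * K) := div_nonneg hl2.le (by positivity)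
    rw [hr₀def]; linarith
  have hμKr₀ : Real.log 2 ≤ μ * K * r₀ := by
    have h : μ * K * r₀ = Real.log 2 + μ * K := by
      rw [hr₀def]; field_simp
    nlinarith
  clear_value sθ cθ μ K r₀
  refine ⟨μ / 2, 4 * k + 8 / (cθ * r₀), r₀, by positivity, by positivity, hr₀, ?_⟩
  intro r hr t ht habs
  have hrpos : 0 < r := lt_of_lt_of_le hr₀ hr
  by_cases htk : t ≤ k
  · -- case t ≤ k
    rw [sqrtBranch, if_pos htk]
    set W := Real.sqrt (k ^ 2 - t ^ 2) with hWdef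
    have habs' : δ ≤ k - t := by
      rw [abs_of_nonpos (by linarith : t - k ≤ 0)] at habs; linarith
    have h1 : k * δ ≤ k ^ 2 - t ^ 2 := by nlinarith
    have hW : K ≤ W := by rw [hKdef, hWdef]; exact Real.sqrt_le_sqrt h1
    have hWk : W ≤ k := by
      rw [hWdef]
      calc Real.sqrt (k ^ 2 - t ^ 2) ≤ Real.sqrt (k ^ 2) := Real.sqrt_le_sqrt (by nlinarith)
        _ = k := by rw [Real.sqrt_sq hk.le]
    have hrW : (-Complex.I * (W : ℂ) * ((r : ℂ) * ((cθ : ℂ) + (sθ : ℂ) * Complex.I))).re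
        = W * r * sθ := aux_re1 W r cθ sθ
    have hlog : Real.log 2 ≤ W * r * sθ := by
      have p1 : K * r₀ ≤ W * r := mul_le_mul hW hr hr₀.le (le_trans hK.le hW)
      have p2 : μ * (K * r₀) ≤ sθ * (W * r) :=
        mul_le_mul hμs p1 (by positivity) hs.le
      nlinarith
    have hbd := aux_div (W : ℂ) _ (hrW ▸ hlog)
    rw [hrW] at hbd
    have habsW : ‖(W : ℂ)‖ = W := by
      exact Complex.norm_of_nonneg (by rw [hWdef]; exact Real.sqrt_nonneg _)
    rw [habsW] at hbd
    refine le_trans hbd ?_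
    have hexp : Real.exp (-(W * r * sθ)) ≤ Real.exp (-(μ / 2) * K * r) := by
      apply Real.exp_le_exp.mpr
      have q1 : K * μ ≤ W * sθ := mul_le_mul hW hμs hμ.le (le_trans hK.le hW)
      nlinarith [mul_le_mul_of_nonneg_right q1 hrpos.le]
    have hC : 0 < 8 / (cθ * r₀) := by positivity
    calc 4 * W * Real.exp (-(W * r * sθ)) ≤ 4 * k * Real.exp (-(μ / 2) * K * r) :=
          mul_le_mul (by linarith) hexp (Real.exp_pos _).le (by positivity)
      _ ≤ (4 * k + 8 / (cθ * r₀)) * Real.exp (-(μ / 2) * K * r) :=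
          mul_le_mul_of_nonneg_right (by linarith) (Real.exp_pos _).le
  · -- case t > k
    rw [sqrtBranch, if_neg htk]
    push_neg at htk
    set S := Real.sqrt (t ^ 2 - k ^ 2) with hSdef
    have habs' : δ ≤ t - k := by rwa [abs_of_nonneg (by linarith)] at habs
    have h1 : k * δ ≤ t ^ 2 - k ^ 2 := by nlinarith
    have hS : K ≤ S := by rw [hKdef, hSdef]; exact Real.sqrt_le_sqrt h1
    have hS0 : 0 ≤ S := Real.sqrt_nonneg _
    have hrS : (-Complex.I * (Complex.I * (S : ℂ)) *
        ((r : ℂ) * ((cθ : ℂ) + (sθ : ℂ) * Complex.I))).re = S * r * cθ := aux_re2 S r cθ sθ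
    have hlog : Real.log 2 ≤ S * r * cθ := by
      have p1 : K * r₀ ≤ S * r := mul_le_mul hS hr hr₀.le (le_trans hK.le hS)
      have p2 : μ * (K * r₀) ≤ cθ * (S * r) :=
        mul_le_mul hμc p1 (by positivity) hc.le
      nlinarith
    have hbd := aux_div (Complex.I * (S : ℂ)) _ (hrS ▸ hlog)
    rw [hrS] at hbd
    have habsS : ‖Complex.I * (S : ℂ)‖ = S := by
      rw [norm_mul, Complex.norm_I, Complex.norm_of_nonneg hS0, one_mul]
    rw [habsS] at hbd
    refine le_trans hbd ?_
    have hsplit : Real.exp (-(S * r * cθ))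
        = Real.exp (-(r * cθ / 2 * S)) * Real.exp (-(S * r * cθ / 2)) := by
      rw [← Real.exp_add]; ring_nf
    have hb1 : S * Real.exp (-(r * cθ / 2 * S)) ≤ 1 / (r * cθ / 2) :=
      aux_exp_bound (r * cθ / 2) S (by positivity) hS0
    have hb1' : 1 / (r * cθ / 2) ≤ 2 / (cθ * r₀) := by
      rw [div_le_div_iff₀ (by positivity) (by positivity)]
      nlinarith [mul_le_mul_of_nonneg_left hr hc.le]
    have hb2 : Real.exp (-(S * r * cθ / 2)) ≤ Real.exp (-(μ / 2) * K * r) := by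
      apply Real.exp_le_exp.mpr
      have q1 : K * μ ≤ S * cθ := mul_le_mul hS hμc hμ.le (le_trans hK.le hS)
      nlinarith [mul_le_mul_of_nonneg_right q1 hrpos.le]
    calc 4 * S * Real.exp (-(S * r * cθ))
        = 4 * (S * Real.exp (-(r * cθ / 2 * S))) * Real.exp (-(S * r * cθ / 2)) := by
          rw [hsplit]; ring
      _ ≤ 4 * (2 / (cθ * r₀)) * Real.exp (-(μ / 2) * K * r) := by
          have e1 : S * Real.exp (-(r * cθ / 2 * S)) ≤ 2 / (cθ * r₀) := le_trans hb1 hb1'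
          exact mul_le_mul (by linarith) hb2 (Real.exp_pos _).le (by positivity)
      _ ≤ (4 * k + 8 / (cθ * r₀)) * Real.exp (-(μ / 2) * K * r) := by
          refine mul_le_mul_of_nonneg_right ?_ (Real.exp_pos _).le
          have h8 : 4 * (2 / (cθ * r₀)) = 8 / (cθ * r₀) := by ring
          rw [h8]; linarith
end

section
/- Let θ ∈ (π/8, π/2), m > 0 and r > 0 be real numbers. Then for every complex number w with |Im w| ≤ Re w and |w| ≥ m², one has |exp(−i · w^{1/2} · r(cos θ + i sin θ))| ≥ exp( m · min(sin(θ − π/8), sin(θ + π/8)) · r ), where w^{1/2} denotes the principal square root of w (the principal value of the complex power w^{1/2}), and the constant min(sin(θ − π/8), sin(θ + π/8)) is positive. -/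
theorem stmt_17 (θ m r : ℝ) (hθ : Real.pi / 8 < θ ∧ θ < Real.pi / 2) (hm : 0 < m) (hr : 0 < r) :
    ∀ w : ℂ, |w.im| ≤ w.re → m ^ 2 ≤ ‖w‖ →
      Real.exp (m * min (Real.sin (θ - Real.pi / 8)) (Real.sin (θ + Real.pi / 8)) * r) ≤
        ‖Complex.exp (-Complex.I * w ^ ((1 : ℂ) / 2) *
          ((r : ℂ) * ((Real.cos θ : ℂ) + (Real.sin θ : ℂ) * Complex.I)))‖ ∧
      0 < min (Real.sin (θ - Real.pi / 8)) (Real.sin (θ + Real.pi / 8)) := by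
  obtain ⟨hθ1, hθ2⟩ := hθ
  have hpi := Real.pi_pos
  have hθpos : 0 < θ := lt_trans (by linarith) hθ1
  -- positivity of min
  have hs1 : 0 < Real.sin (θ - Real.pi / 8) :=
    Real.sin_pos_of_pos_of_lt_pi (by linarith) (by linarith)
  have hs2 : 0 < Real.sin (θ + Real.pi / 8) :=
    Real.sin_pos_of_pos_of_lt_pi (by linarith) (by linarith)
  have hminpos : 0 < min (Real.sin (θ - Real.pi / 8)) (Real.sin (θ + Real.pi / 8)) :=
    lt_min hs1 hs2
  intro w him habs
  refine ⟨?_, hminpos⟩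
  have hw0 : w ≠ 0 := by
    intro h
    rw [h] at habs
    simp at habs
    nlinarith
  have habs_pos : 0 < ‖w‖ := norm_pos_iff.mpr hw0
  -- arg bound
  have hrepos : (0:ℝ) ≤ w.re := le_trans (abs_nonneg _) him
  have harg2 : |Complex.arg w| ≤ Real.pi / 2 :=
    Complex.abs_arg_le_pi_div_two_iff.mpr hrepos
  have hsin_arg : Real.sin (Complex.arg w) = w.im / ‖w‖ := Complex.sin_arg w
  have habs_ge : Real.sqrt 2 * |w.im| ≤ ‖w‖ := by
    rw [Complex.norm_def, Complex.normSq_apply]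
    have h2 : Real.sqrt 2 * |w.im| = Real.sqrt (2 * w.im ^ 2) := by
      rw [Real.sqrt_mul (by norm_num), Real.sqrt_sq_eq_abs]
    rw [h2]
    apply Real.sqrt_le_sqrt
    have := abs_le.mp (le_refl |w.im|)
    nlinarith [sq_abs w.im, sq_nonneg (w.re - |w.im|)]
  have hsqrt2 : (0:ℝ) < Real.sqrt 2 := by positivity
  have hsinle : |Real.sin (Complex.arg w)| ≤ Real.sin (Real.pi / 4) := by
    rw [Real.sin_pi_div_four, hsin_arg, abs_div, abs_of_pos habs_pos]
    rw [div_le_div_iff₀ habs_pos (by norm_num)]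
    have h22 : Real.sqrt 2 * Real.sqrt 2 = 2 := Real.mul_self_sqrt (by norm_num)
    nlinarith
  have harg : |Complex.arg w| ≤ Real.pi / 4 := by
    by_contra hc
    push_neg at hc
    have h1 : Real.sin (Real.pi / 4) < Real.sin |Complex.arg w| := by
      apply Real.strictMonoOn_sin ⟨by linarith, by linarith⟩
        ⟨by linarith [abs_nonneg (Complex.arg w)], harg2⟩ hc
    have hb := abs_le.mp hsinle
    rcases abs_choice w.arg with h | h <;> rw [h] at h1
    · linarith [hb.2]
    · rw [Real.sin_neg] at h1; linarith [hb.1]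
  -- square root
  set τ := Complex.arg w / 2 with hτdef
  have hτ : |τ| ≤ Real.pi / 8 := by
    rw [hτdef, abs_div]
    rw [abs_of_pos (by norm_num : (0:ℝ) < 2)]
    linarith
  set ρ := Real.exp (Real.log ‖w‖ / 2) with hρdef
  have hρm : m ≤ ρ := by
    have hlog : 2 * Real.log m ≤ Real.log ‖w‖ := by
      have := Real.log_le_log (by positivity) habs
      rwa [Real.log_pow, Nat.cast_ofNat] at this
    calc m = Real.exp (Real.log m) := (Real.exp_log hm).symm
      _ ≤ ρ := Real.exp_le_exp.mpr (by linarith)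
  have hρpos : 0 < ρ := Real.exp_pos _
  have hs : w ^ ((1:ℂ)/2) = Complex.exp (Complex.log w * (1/2)) :=
    Complex.cpow_def_of_ne_zero hw0 _
  have hsre : (w ^ ((1:ℂ)/2)).re = ρ * Real.cos τ := by
    rw [hs, Complex.exp_re]
    congr 1
    · congr 1
      simp [Complex.log_re]
      ring
    · congr 1
      simp [Complex.log_im]
      ring
  have hsim : (w ^ ((1:ℂ)/2)).im = ρ * Real.sin τ := by
    rw [hs, Complex.exp_im]
    congr 1
    · congr 1
      simp [Complex.log_re]
      ring
    · congr 1
      simp [Complex.log_im]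
      ring
  -- real part of the exponent
  rw [Complex.norm_exp, Real.exp_le_exp]
  have hZre : (-Complex.I * w ^ ((1:ℂ)/2) *
      ((r : ℂ) * ((Real.cos θ : ℂ) + (Real.sin θ : ℂ) * Complex.I))).re =
      r * ((w ^ ((1:ℂ)/2)).re * Real.sin θ + (w ^ ((1:ℂ)/2)).im * Real.cos θ) := by
    simp [Complex.mul_re, Complex.mul_im, Complex.sin_ofReal_re, Complex.cos_ofReal_re]
    ring
  rw [hZre, hsre, hsim]
  -- trig bounds
  have hcosτ : Real.cos (Real.pi / 8) ≤ Real.cos τ := by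
    rw [← Real.cos_abs τ]
    exact Real.cos_le_cos_of_nonneg_of_le_pi (abs_nonneg _) (by linarith) hτ
  have hsinτ : -Real.sin (Real.pi / 8) ≤ Real.sin τ := by
    rw [← Real.sin_neg]
    have := abs_le.mp hτ
    apply Real.strictMonoOn_sin.monotoneOn ⟨by linarith, by linarith⟩
      ⟨by linarith, by linarith⟩ (by linarith)
  have hsinθ : 0 < Real.sin θ := Real.sin_pos_of_pos_of_lt_pi hθpos (by linarith)
  have hcosθ : 0 ≤ Real.cos θ := Real.cos_nonneg_of_mem_Icc ⟨by linarith, le_of_lt hθ2⟩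
  have hsub : Real.sin (θ - Real.pi / 8) =
      Real.sin θ * Real.cos (Real.pi / 8) - Real.cos θ * Real.sin (Real.pi / 8) :=
    Real.sin_sub θ (Real.pi / 8)
  have hmin : min (Real.sin (θ - Real.pi / 8)) (Real.sin (θ + Real.pi / 8)) ≤
      Real.sin (θ - Real.pi / 8) := min_le_left _ _
  have key : Real.sin (θ - Real.pi / 8) ≤
      Real.sin θ * Real.cos τ + Real.cos θ * Real.sin τ := by
    rw [hsub]
    have a1 := mul_le_mul_of_nonneg_left hcosτ (le_of_lt hsinθ)
    have a2 := mul_le_mul_of_nonneg_left hsinτ hcosθ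
    linarith
  have h3 : m * min (Real.sin (θ - Real.pi / 8)) (Real.sin (θ + Real.pi / 8)) ≤
      ρ * Real.sin (θ - Real.pi / 8) :=
    mul_le_mul hρm hmin (le_of_lt hminpos) (le_of_lt hρpos)
  have h4 : ρ * Real.sin (θ - Real.pi / 8) ≤
      ρ * (Real.sin θ * Real.cos τ + Real.cos θ * Real.sin τ) :=
    mul_le_mul_of_nonneg_left key (le_of_lt hρpos)
  have h5 := mul_le_mul_of_nonneg_right (le_trans h3 h4) (le_of_lt hr)
  exact le_trans h5 (le_of_eq (by ring))
end

section
/- Define, for a nonzero complex number w, the square root ρ(w) = e^{iπ/4} · (−i·w)^{1/2}, where (·)^{1/2} is the principal complex square root; this is the square root branch with branch cut on the negative imaginary axis, i.e. ρ(w) = |w|^{1/2} e^{it/2} where t is the argument of w taken in (−π/2, 3π/2]. Let θ ∈ (0, (π − arctan 2)/2), m > 0 and r > 0 be real numbers. Then for every complex number w with Re w ≤ −m² and |Im w| ≤ 2·|Re w|, one has |exp(−i · ρ(w) · r(cos θ + i sin θ))| ≥ exp( m · γ · r ), where γ = min( sin(θ + (π − arctan 2)/2), sin(θ + (π + arctan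 2)/2) ) > 0. -/
/-- The square root branch with branch cut on the negative imaginary axis:
`ρ(w) = e^{iπ/4} · (−i·w)^{1/2}`, i.e. `ρ(w) = |w|^{1/2} e^{it/2}` for the argument
`t` of `w` taken in `(−π/2, 3π/2]`. -/
noncomputable def rho (w : ℂ) : ℂ :=
  Complex.exp (Complex.I * (Real.pi / 4)) * (-Complex.I * w) ^ ((1 : ℂ) / 2)

open Real Complex in
theorem stmt_18 (θ m r : ℝ) (hθ : 0 < θ ∧ θ < (Real.pi - Real.arctan 2) / 2)
    (hm : 0 < m) (hr : 0 < r) :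
    ∀ w : ℂ, w.re ≤ -m ^ 2 → |w.im| ≤ 2 * |w.re| →
      Real.exp (m * min (Real.sin (θ + (Real.pi - Real.arctan 2) / 2))
          (Real.sin (θ + (Real.pi + Real.arctan 2) / 2)) * r) ≤
        ‖Complex.exp (-Complex.I * rho w *
          ((r : ℂ) * ((Real.cos θ : ℂ) + (Real.sin θ : ℂ) * Complex.I)))‖ ∧
      0 < min (Real.sin (θ + (Real.pi - Real.arctan 2) / 2))
          (Real.sin (θ + (Real.pi + Real.arctan 2) / 2)) := by
  obtain ⟨hθ0, hθ1⟩ := hθ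
  have hat0 : (0:ℝ) < Real.arctan 2 := by
    rw [← Real.arctan_zero]; exact Real.arctan_strictMono (by norm_num)
  have hat2 : Real.arctan 2 < π / 2 := Real.arctan_lt_pi_div_two 2
  set c : ℝ := Real.arctan 2 / 2 with hc
  have hc0 : 0 < c := by positivity
  have hcpi : c < π / 4 := by rw [hc]; linarith
  have hγ1 : Real.sin (θ + (π - Real.arctan 2) / 2) = Real.cos (θ - c) := by
    rw [show θ + (π - Real.arctan 2) / 2 = (θ - c) + π / 2 by rw [hc]; ring,
      Real.sin_add_pi_div_two]
  have hγ2 : Real.sin (θ + (π + Real.arctan 2) / 2) = Real.cos (θ + c) := by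
    rw [show θ + (π + Real.arctan 2) / 2 = (θ + c) + π / 2 by rw [hc]; ring,
      Real.sin_add_pi_div_two]
  have hθc : θ + c < π / 2 := by rw [hc]; linarith
  have hpos1 : 0 < Real.cos (θ - c) := Real.cos_pos_of_mem_Ioo
    ⟨by linarith [Real.pi_pos], by linarith⟩
  have hpos2 : 0 < Real.cos (θ + c) := Real.cos_pos_of_mem_Ioo
    ⟨by linarith [Real.pi_pos], by linarith⟩
  have hγpos : 0 < min (Real.sin (θ + (π - Real.arctan 2) / 2))
      (Real.sin (θ + (π + Real.arctan 2) / 2)) := by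
    rw [hγ1, hγ2]; exact lt_min hpos1 hpos2
  intro w hre him
  refine ⟨?_, hγpos⟩
  set γ : ℝ := min (Real.sin (θ + (π - Real.arctan 2) / 2))
      (Real.sin (θ + (π + Real.arctan 2) / 2)) with hγ
  have hm2 : (0:ℝ) < m ^ 2 := by positivity
  set u : ℂ := -Complex.I * w with hu
  have hure : u.re = w.im := by simp [hu]
  have huim : u.im = -w.re := by simp [hu]
  have huim' : m ^ 2 ≤ u.im := by rw [huim]; linarith
  have huimpos : 0 < u.im := lt_of_lt_of_le hm2 huim'
  have hu0 : u ≠ 0 := by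
    intro h; rw [h] at huimpos; simp at huimpos
  have habsu : m ^ 2 ≤ ‖u‖ :=
    huim'.trans ((le_abs_self _).trans (Complex.abs_im_le_norm u))
  have habsupos : 0 < ‖u‖ := lt_of_lt_of_le hm2 habsu
  -- |u.re| ≤ 2 * u.im
  have hre2 : |u.re| ≤ 2 * u.im := by
    rw [hure, huim]
    calc |w.im| ≤ 2 * |w.re| := him
    _ = 2 * -w.re := by rw [abs_of_nonpos (by nlinarith)]
  -- bound |cos (arg u)|
  have hsq : (‖u‖) ^ 2 = u.re ^ 2 + u.im ^ 2 := by
    rw [Complex.sq_norm, Complex.normSq_apply]; ring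
  have hsin : Real.sin (Real.arctan 2) = 2 / Real.sqrt 5 := by
    rw [Real.sin_arctan]; norm_num
  have hs5 : (0:ℝ) < Real.sqrt 5 := Real.sqrt_pos.mpr (by norm_num)
  have hs5sq : (Real.sqrt 5) ^ 2 = 5 := Real.sq_sqrt (by norm_num)
  have hcosb : |Real.cos u.arg| ≤ Real.sin (Real.arctan 2) := by
    rw [Complex.cos_arg hu0, hsin, abs_div, abs_of_pos habsupos, div_le_div_iff₀ habsupos hs5]
    have h1 : |u.re| * Real.sqrt 5 ≤ 2 * ‖u‖ := by
      have hsq' : (|u.re| * Real.sqrt 5) ^ 2 ≤ (2 * ‖u‖) ^ 2 := by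
        rw [mul_pow, mul_pow, hs5sq, hsq]
        nlinarith [abs_nonneg u.re, _root_.sq_abs u.re, hre2, huimpos.le]
      have := Real.sqrt_le_sqrt hsq'
      rwa [Real.sqrt_sq (by positivity), Real.sqrt_sq (by positivity)] at this
      -- fix below if needed
    exact h1
  have harg0 : 0 ≤ u.arg := Complex.arg_nonneg_iff.mpr huimpos.le
  have hargpi : u.arg ≤ π := Complex.arg_le_pi u
  have hmem : u.arg ∈ Set.Icc 0 π := ⟨harg0, hargpi⟩
  have hmem1 : π / 2 - Real.arctan 2 ∈ Set.Icc 0 π := ⟨by linarith, by linarith [Real.pi_pos]⟩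
  have hmem2 : π / 2 + Real.arctan 2 ∈ Set.Icc 0 π := ⟨by linarith, by linarith⟩
  have hlow : π / 2 - Real.arctan 2 ≤ u.arg := by
    have hcc : Real.cos u.arg ≤ Real.cos (π / 2 - Real.arctan 2) := by
      rw [Real.cos_pi_div_two_sub]
      exact (le_abs_self _).trans hcosb
    exact (Real.strictAntiOn_cos.le_iff_ge hmem hmem1).mp hcc
  have hhigh : u.arg ≤ π / 2 + Real.arctan 2 := by
    have hcc : Real.cos (π / 2 + Real.arctan 2) ≤ Real.cos u.arg := by
      have : Real.cos (π / 2 + Real.arctan 2) = -Real.sin (Real.arctan 2) := by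
        rw [Real.cos_add]; simp
      rw [this]
      linarith [neg_abs_le (Real.cos u.arg)]
    exact (Real.strictAntiOn_cos.le_iff_ge hmem2 hmem).mp hcc
  -- rewrite the argument of exp
  set x : ℝ := u.arg / 2 + θ - π / 4 with hx
  have hzeq : -Complex.I * rho w * ((r : ℂ) * ((Real.cos θ : ℂ) + (Real.sin θ : ℂ) * Complex.I))
      = (r : ℂ) * Complex.exp (((Real.log (‖u‖) / 2 : ℝ) : ℂ) + (x : ℝ) * Complex.I) := by
    rw [rho, ← hu, Complex.cpow_def_of_ne_zero hu0]
    have h1 : (Real.cos θ : ℂ) + (Real.sin θ : ℂ) * Complex.I = Complex.exp ((θ : ℂ) * Complex.I) := by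
      rw [Complex.exp_mul_I, Complex.ofReal_cos, Complex.ofReal_sin]
    have h2 : -Complex.I = Complex.exp ((-(π / 2 : ℝ) : ℂ) * Complex.I) := by
      rw [Complex.exp_mul_I]
      push_cast
      rw [Complex.cos_neg, Complex.sin_neg, Complex.cos_pi_div_two, Complex.sin_pi_div_two]
      ring
    have hXeq : (((Real.log (‖u‖) / 2 : ℝ) : ℂ) + (x : ℝ) * Complex.I)
        = (-(π / 2 : ℝ) : ℂ) * Complex.I + Complex.I * ((Real.pi : ℂ) / 4)
          + Complex.log u * (1 / 2) + (θ : ℂ) * Complex.I := by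
      apply Complex.ext
      · simp [Complex.log_re]; ring
      · simp [Complex.log_im, hx]; ring
    rw [h1, h2, hXeq, Complex.exp_add, Complex.exp_add, Complex.exp_add]
    ring
  rw [hzeq, Complex.norm_exp, Real.exp_le_exp, Complex.re_ofReal_mul, Complex.exp_re]
  have hreim : (((Real.log (‖u‖) / 2 : ℝ) : ℂ) + (x : ℝ) * Complex.I).re
      = Real.log (‖u‖) / 2 ∧
      (((Real.log (‖u‖) / 2 : ℝ) : ℂ) + (x : ℝ) * Complex.I).im = x := by
    constructor <;> simp
  rw [hreim.1, hreim.2]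
  -- now real inequality
  have hs : m ≤ Real.exp (Real.log (‖u‖) / 2) := by
    have : Real.log (m ^ 2) ≤ Real.log (‖u‖) := Real.log_le_log hm2 habsu
    rw [Real.log_pow] at this
    calc m = Real.exp (Real.log m) := (Real.exp_log hm).symm
    _ ≤ Real.exp (Real.log (‖u‖) / 2) := Real.exp_le_exp.mpr (by push_cast at this; linarith)
  have hxb : |x| ≤ θ + c := by
    rw [abs_le]; constructor
    · rw [hx, hc]; linarith
    · rw [hx, hc]; linarith
  have hcosx : γ ≤ Real.cos x := by
    have h1 : Real.cos (θ + c) ≤ Real.cos |x| :=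
      Real.cos_le_cos_of_nonneg_of_le_pi (abs_nonneg x) (by linarith [Real.pi_pos]) hxb
    rw [Real.cos_abs] at h1
    calc γ ≤ Real.sin (θ + (π + Real.arctan 2) / 2) := min_le_right _ _
    _ = Real.cos (θ + c) := hγ2
    _ ≤ Real.cos x := h1
  have hγγ : 0 < γ := hγpos
  have hcosxpos : 0 < Real.cos x := lt_of_lt_of_le hγγ hcosx
  calc m * γ * r = r * (m * γ) := by ring
  _ ≤ r * (Real.exp (Real.log (‖u‖) / 2) * Real.cos x) :=
    mul_le_mul_of_nonneg_left
      (mul_le_mul hs hcosx hγγ.le (Real.exp_pos _).le) hr.le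
end
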